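/- arXiv:1703.00653 — 6 statements merged into one kernel-verified Lean document; each statement's English description precedes it below -/
import Mathlib

section
/- Let θ₁,…,θ_k ∈ [0,2π) be distinct, let m₁,…,m_k be strictly positive integers, and let α = (α_n)_{n≥0} be a bounded sequence of complex numbers. Then the following two sets of conditions are equivalent. (L₁): there exist sequences β⁽¹⁾,…,β⁽ᵏ⁾ of complex numbers with α = β⁽¹⁾ + ⋯ + β⁽ᵏ⁾ such that for each j, (S − e^{iθ_j})^{m_j} β⁽ʲ⁾ ∈ ℓ² and β⁽ʲ⁾ ∈ ℓ^{2m_j+2}. (L₂): ∏_{j=1}^{k}(S − e^{iθ_j})^{m_j} α ∈ ℓ², and for each q ∈ {1,…,k}, ∏_{j≠q}(S − e^{iθ_j})^{m_j} α ∈ ℓ^{2m_q+2}. -/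
open scoped BigOperators

/-- Application of a polynomial in the shift operator `S`, `(Sa)_n = a_{n+1}`,
to a one-sided sequence: `(P(S)a)_n = ∑_ℓ P_ℓ a_{n+ℓ}`. -/
noncomputable def applyPoly (P : Polynomial ℂ) (a : ℕ → ℂ) : ℕ → ℂ :=
  fun n => ∑ ℓ ∈ Finset.range (P.natDegree + 1), P.coeff ℓ * a (n + ℓ)

section
open Polynomial

namespace Helper

noncomputable def Sh : Module.End ℂ (ℕ → ℂ) where
  toFun a := fun n => a (n + 1)
  map_add' := by intros; rfl
  map_smul' := by intros; rfl

lemma Sh_pow_apply (i : ℕ) (a : ℕ → ℂ) (n : ℕ) : (Sh ^ i) a n = a (n + i) := by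
  induction i generalizing a with
  | zero => rfl
  | succ i ih =>
    rw [pow_succ]
    show (Sh ^ i) (Sh a) n = _
    rw [ih]
    show a (n + i + 1) = a (n + (i + 1))
    rw [add_assoc]

lemma applyPoly_ext (P : ℂ[X]) (a : ℕ → ℂ) {N : ℕ} (h : P.natDegree < N) (n : ℕ) :
    applyPoly P a n = ∑ ℓ ∈ Finset.range N, P.coeff ℓ * a (n + ℓ) := by
  refine Finset.sum_subset (Finset.range_subset_range.2 h) (fun x _ hx => ?_)
  rw [coeff_eq_zero_of_natDegree_lt, zero_mul]
  simp only [Finset.mem_range] at hx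
  omega

lemma applyPoly_add (P Q : ℂ[X]) (a : ℕ → ℂ) :
    applyPoly (P + Q) a = fun n => applyPoly P a n + applyPoly Q a n := by
  funext n
  set N := max (P.natDegree) (Q.natDegree) + 1 with hN
  have h1 : (P + Q).natDegree < N := lt_of_le_of_lt (natDegree_add_le P Q) (by omega)
  rw [applyPoly_ext _ _ h1, applyPoly_ext P a (show P.natDegree < N by omega),
    applyPoly_ext Q a (show Q.natDegree < N by omega), ← Finset.sum_add_distrib]
  simp [add_mul]

lemma applyPoly_monomial (i : ℕ) (c : ℂ) (a : ℕ → ℂ) :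
    applyPoly (monomial i c) a = fun n => c * a (n + i) := by
  funext n
  rcases eq_or_ne c 0 with rfl | hc
  · simp [applyPoly]
  · rw [applyPoly_ext (N := i + 1) _ _ (by rw [natDegree_monomial_eq i hc]; omega)]
    simp [coeff_monomial, Finset.sum_ite_eq]

lemma applyPoly_eq_aeval (P : ℂ[X]) (a : ℕ → ℂ) :
    applyPoly P a = (Polynomial.aeval Sh) P a := by
  induction P using Polynomial.induction_on' with
  | add p q hp hq => rw [applyPoly_add, map_add, LinearMap.add_apply]; funext n
                     simp [hp, hq]
  | monomial i c =>
    rw [applyPoly_monomial, aeval_monomial]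
    funext n
    rw [Module.End.mul_apply, Module.algebraMap_end_apply]
    simp [Sh_pow_apply]

lemma applyPoly_mul (P Q : ℂ[X]) (a : ℕ → ℂ) :
    applyPoly (P * Q) a = applyPoly P (applyPoly Q a) := by
  simp [applyPoly_eq_aeval, map_mul, Module.End.mul_apply]

lemma applyPoly_one (a : ℕ → ℂ) : applyPoly 1 a = a := by
  rw [applyPoly_eq_aeval, map_one]; rfl


lemma applyPoly_sum_right {ι : Type*} (s : Finset ι) (P : ℂ[X]) (b : ι → ℕ → ℂ) :
    applyPoly P (fun n => ∑ i ∈ s, b i n) = fun n => ∑ i ∈ s, applyPoly P (b i) n := by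
  rw [applyPoly_eq_aeval]
  have hb : (fun n => ∑ i ∈ s, b i n) = ∑ i ∈ s, b i := by
    funext n; simp [Finset.sum_apply]
  rw [hb, map_sum]
  funext n
  simp [Finset.sum_apply, applyPoly_eq_aeval]

lemma applyPoly_sum_left {ι : Type*} (s : Finset ι) (P : ι → ℂ[X]) (a : ℕ → ℂ) (n : ℕ) :
    applyPoly (∑ i ∈ s, P i) a n = ∑ i ∈ s, applyPoly (P i) a n := by
  simp [applyPoly_eq_aeval, map_sum, LinearMap.sum_apply]


def MemP (p : ℕ) (a : ℕ → ℂ) : Prop := Summable fun n => ‖a n‖ ^ p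

lemma memP_shift {p : ℕ} {a : ℕ → ℂ} (ℓ : ℕ) (h : MemP p a) :
    MemP p (fun n => a (n + ℓ)) :=
  h.comp_injective (add_left_injective ℓ)

lemma memP_smul {p : ℕ} {a : ℕ → ℂ} (c : ℂ) (h : MemP p a) :
    MemP p (fun n => c * a n) := by
  have := h.mul_left (‖c‖ ^ p)
  simpa [MemP, norm_mul, mul_pow] using this

lemma memP_add {p : ℕ} {a b : ℕ → ℂ} (ha : MemP p a) (hb : MemP p b) :
    MemP p (fun n => a n + b n) := by
  refine Summable.of_nonneg_of_le (fun n => by positivity) (fun n => ?_)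
    (((ha.add hb)).mul_left ((2 : ℝ) ^ p))
  have h1 : ‖a n + b n‖ ≤ 2 * max ‖a n‖ ‖b n‖ := by
    refine (norm_add_le _ _).trans ?_
    have := add_le_add (le_max_left ‖a n‖ ‖b n‖) (le_max_right ‖a n‖ ‖b n‖)
    linarith
  calc ‖a n + b n‖ ^ p ≤ (2 * max ‖a n‖ ‖b n‖) ^ p :=
        pow_le_pow_left₀ (norm_nonneg _) h1 p
    _ = 2 ^ p * max ‖a n‖ ‖b n‖ ^ p := by rw [mul_pow]
    _ ≤ 2 ^ p * (‖a n‖ ^ p + ‖b n‖ ^ p) := by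
        gcongr
        rcases le_total ‖a n‖ ‖b n‖ with h | h
        · rw [max_eq_right h]; nlinarith [pow_nonneg (norm_nonneg (a n)) p]
        · rw [max_eq_left h]; nlinarith [pow_nonneg (norm_nonneg (b n)) p]

lemma memP_sum {p : ℕ} (hp : 1 ≤ p) {ι : Type*} (s : Finset ι) (b : ι → ℕ → ℂ)
    (h : ∀ i ∈ s, MemP p (b i)) : MemP p (fun n => ∑ i ∈ s, b i n) := by
  classical
  induction s using Finset.cons_induction with
  | empty => simpa [MemP, zero_pow (show p ≠ 0 by omega)] using summable_zero
  | cons i s hi ih =>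
    simp only [Finset.sum_cons]
    exact memP_add (h i (Finset.mem_cons_self i s))
      (ih fun j hj => h j (Finset.mem_cons_of_mem hj))

lemma memP_mono {p : ℕ} (hp : 2 ≤ p) {a : ℕ → ℂ} (h : MemP 2 a) : MemP p a := by
  have htend : Filter.Tendsto (fun n => ‖a n‖ ^ 2) Filter.atTop (nhds 0) :=
    h.tendsto_atTop_zero
  have hev : ∀ᶠ n in Filter.atTop, ‖a n‖ ^ 2 ≤ 1 :=
    htend.eventually (eventually_le_nhds (by norm_num))
  obtain ⟨N, hN⟩ := Filter.eventually_atTop.1 hev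
  unfold MemP
  rw [← summable_nat_add_iff N]
  refine Summable.of_nonneg_of_le (fun n => by positivity) (fun n => ?_)
    ((summable_nat_add_iff N).2 h)
  have h1 : ‖a (n + N)‖ ≤ 1 := by
    have := hN (n + N) (by omega)
    nlinarith [norm_nonneg (a (n + N))]
  exact pow_le_pow_of_le_one (norm_nonneg _) h1 hp



lemma memP_applyPoly {p : ℕ} (hp : 1 ≤ p) (P : ℂ[X]) {a : ℕ → ℂ} (h : MemP p a) :
    MemP p (applyPoly P a) :=
  memP_sum hp _ _ (fun ℓ _ => memP_smul (P.coeff ℓ) (memP_shift ℓ h))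




lemma bezout {ι : Type*} [DecidableEq ι] (f : ι → ℂ[X]) (s : Finset ι) :
    s.Nonempty → (Set.Pairwise (s : Set ι) fun i j => IsCoprime (f i) (f j)) →
    ∃ R : ι → ℂ[X], ∑ q ∈ s, R q * ∏ j ∈ s.erase q, f j = 1 := by
  induction s using Finset.cons_induction with
  | empty => intro h; exact absurd rfl h.ne_empty
  | cons a s ha ih =>
    intro _ hpair
    rcases s.eq_empty_or_nonempty with rfl | hs
    · exact ⟨fun _ => 1, by simp⟩
    · have hsub : (s : Set ι) ⊆ (Finset.cons a s ha : Finset ι) := by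
        intro x hx; simp only [Finset.coe_cons, Set.mem_insert_iff]
        exact Or.inr hx
      obtain ⟨R, hR⟩ := ih hs (hpair.mono hsub)
      have hcop : IsCoprime (f a) (∏ j ∈ s, f j) :=
        IsCoprime.prod_right fun j hj =>
          hpair (by simp) (by simp [hj]) (fun hhh => ha (hhh ▸ hj))
      obtain ⟨u, v, huv⟩ := hcop
      refine ⟨fun q => if q = a then v else u * R q, ?_⟩
      rw [Finset.sum_cons]
      have herase : (Finset.cons a s ha).erase a = s := by
        rw [Finset.cons_eq_insert, Finset.erase_insert (by simpa using ha)]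
      simp only []
      rw [herase, if_pos trivial]
      have hsum : ∑ q ∈ s, (if q = a then v else u * R q) * ∏ j ∈ (Finset.cons a s ha).erase q, f j
          = u * f a * ∑ q ∈ s, R q * ∏ j ∈ s.erase q, f j := by
        rw [Finset.mul_sum]
        refine Finset.sum_congr rfl fun q hq => ?_
        have hqa : q ≠ a := fun h => ha (h ▸ hq)
        rw [if_neg hqa]
        have herase2 : (Finset.cons a s ha).erase q = Finset.cons a (s.erase q)
            (by simp [ha, Finset.mem_erase]) := by
          rw [Finset.cons_eq_insert, Finset.cons_eq_insert]
          exact Finset.erase_insert_of_ne hqa.symm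
        rw [herase2, Finset.prod_cons]
        ring
      rw [hsum, hR, mul_one]
      linear_combination huv

lemma exp_inj {k : ℕ} (θ : Fin k → ℝ) (hθmem : ∀ j, θ j ∈ Set.Ico 0 (2 * Real.pi))
    (hθinj : Function.Injective θ) :
    Function.Injective (fun j => Complex.exp (θ j * Complex.I)) := by
  intro i j h
  apply hθinj
  simp only at h
  rw [Complex.exp_eq_exp_iff_exists_int] at h
  obtain ⟨n, hn⟩ := h
  have him : (θ i : ℝ) = θ j + n * (2 * Real.pi) := by
    have := congrArg Complex.im hn
    simpa [Complex.add_im, Complex.mul_im] using this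
  obtain ⟨h1a, h1b⟩ := hθmem i
  obtain ⟨h2a, h2b⟩ := hθmem j
  have hπ := Real.pi_pos
  have hn0 : n = 0 := by
    rcases lt_trichotomy n 0 with h | h | h
    · have : (n : ℝ) ≤ -1 := by exact_mod_cast (show n ≤ -1 by omega)
      nlinarith
    · exact h
    · have : (1 : ℝ) ≤ n := by exact_mod_cast h
      nlinarith
  rw [hn0] at him; push_cast at him; linarith


end Helper

end

open Helper Polynomial

theorem stmt0 (k : ℕ) (hk : 1 ≤ k) (θ : Fin k → ℝ)
    (hθmem : ∀ j, θ j ∈ Set.Ico 0 (2 * Real.pi)) (hθinj : Function.Injective θ)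
    (m : Fin k → ℕ) (hm : ∀ j, 1 ≤ m j)
    (α : ℕ → ℂ) (hbdd : ∃ C : ℝ, ∀ n, ‖α n‖ ≤ C) :
    (∃ β : Fin k → ℕ → ℂ,
        (∀ n, α n = ∑ j, β j n) ∧
        (∀ j, Summable (fun n =>
          ‖applyPoly ((Polynomial.X - Polynomial.C (Complex.exp (θ j * Complex.I))) ^ m j)
              (β j) n‖ ^ (2 : ℕ))) ∧
        (∀ j, Summable (fun n => ‖β j n‖ ^ (2 * m j + 2)))) ↔
      (Summable (fun n =>
          ‖applyPoly (∏ j, (Polynomial.X - Polynomial.C (Complex.exp (θ j * Complex.I))) ^ m j)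
              α n‖ ^ (2 : ℕ)) ∧
        ∀ q : Fin k, Summable (fun n =>
          ‖applyPoly (∏ j ∈ Finset.univ.erase q,
              (Polynomial.X - Polynomial.C (Complex.exp (θ j * Complex.I))) ^ m j)
              α n‖ ^ (2 * m q + 2))) := by
  classical
  set f : Fin k → Polynomial ℂ :=
    fun j => (Polynomial.X - Polynomial.C (Complex.exp (θ j * Complex.I))) ^ m j with hf
  constructor
  · rintro ⟨β, hsum, h1, h2⟩
    have hα : α = fun n => ∑ j, β j n := funext hsum
    constructor
    · show MemP 2 (applyPoly (∏ j, f j) α)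
      rw [hα, applyPoly_sum_right]
      refine memP_sum (by norm_num) Finset.univ _ (fun j _ => ?_)
      have hj : (∏ j', f j') = (∏ j' ∈ Finset.univ.erase j, f j') * f j :=
        (Finset.prod_erase_mul _ _ (Finset.mem_univ j)).symm
      rw [hj, applyPoly_mul]
      exact memP_applyPoly (by norm_num) _ (h1 j)
    · intro q
      show MemP (2 * m q + 2) (applyPoly (∏ j ∈ Finset.univ.erase q, f j) α)
      rw [hα, applyPoly_sum_right]
      refine memP_sum (by omega) Finset.univ _ (fun j _ => ?_)
      by_cases hj : j = q
      · subst hj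
        exact memP_applyPoly (by omega) _ (h2 j)
      · have hjmem : j ∈ Finset.univ.erase q :=
          Finset.mem_erase.2 ⟨hj, Finset.mem_univ j⟩
        have hsplit : (∏ j' ∈ Finset.univ.erase q, f j') =
            (∏ j' ∈ (Finset.univ.erase q).erase j, f j') * f j :=
          (Finset.prod_erase_mul _ _ hjmem).symm
        rw [hsplit, applyPoly_mul]
        exact memP_mono (by omega) (memP_applyPoly (by norm_num) _ (h1 j))
  · rintro ⟨hfull, herase⟩
    have hne : (Finset.univ : Finset (Fin k)).Nonempty := ⟨⟨0, hk⟩, Finset.mem_univ _⟩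
    have hpair : Set.Pairwise ((Finset.univ : Finset (Fin k)) : Set (Fin k))
        fun i j => IsCoprime (f i) (f j) := by
      intro i _ j _ hij
      exact (Polynomial.pairwise_coprime_X_sub_C (exp_inj θ hθmem hθinj) hij).pow
    obtain ⟨R, hR⟩ := bezout f Finset.univ hne hpair
    refine ⟨fun j => applyPoly (R j * ∏ j' ∈ Finset.univ.erase j, f j') α, ?_, ?_, ?_⟩
    · intro n
      have h1 : α n = applyPoly (∑ q, R q * ∏ j ∈ Finset.univ.erase q, f j) α n := by
        rw [hR, applyPoly_one]
      rw [h1, applyPoly_sum_left]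
    · intro j
      show MemP 2 (applyPoly (f j) (applyPoly (R j * ∏ j' ∈ Finset.univ.erase j, f j') α))
      rw [← applyPoly_mul]
      have heq : f j * (R j * ∏ j' ∈ Finset.univ.erase j, f j') = R j * ∏ j', f j' := by
        rw [mul_left_comm, Finset.mul_prod_erase _ _ (Finset.mem_univ j)]
      rw [heq, applyPoly_mul]
      exact memP_applyPoly (by norm_num) _ hfull
    · intro j
      show MemP (2 * m j + 2) (applyPoly (R j * ∏ j' ∈ Finset.univ.erase j, f j') α)
      rw [applyPoly_mul]
      exact memP_applyPoly (by omega) _ (herase j)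
end

section
/- Let θ₁,…,θ_k ∈ [0,2π) be distinct, let m₁,…,m_k be strictly positive integers, set m = max_{1≤j≤k} m_j, and let α = (α_n)_{n≥0} be a bounded sequence of complex numbers. Then the following two sets of conditions are equivalent. (L₁): there exist sequences β⁽¹⁾,…,β⁽ᵏ⁾ of complex numbers with α = β⁽¹⁾ + ⋯ + β⁽ᵏ⁾ such that for each j, (S − e^{iθ_j})^{m_j} β⁽ʲ⁾ ∈ ℓ² and β⁽ʲ⁾ ∈ ℓ^{2m_j+2}. (L₃): ∏_{j=1}^{k}(S − e^{iθ_j})^{m_j} α ∈ ℓ²; for each q ∈ {1,…,k} with m_q < m, ∏_{j≠q}(S − e^{iθ_j})^{m_j} α ∈ ℓ^{2m_q+2}; and α ∈ ℓ^{2m+2}. -/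
open scoped BigOperators

/-- The shift operator as a linear endomorphism. -/
noncomputable def shiftL : Module.End ℂ (ℕ → ℂ) where
  toFun a := fun n => a (n + 1)
  map_add' _ _ := rfl
  map_smul' _ _ := rfl

lemma shiftL_pow (ℓ : ℕ) : ∀ (a : ℕ → ℂ) (n : ℕ), (shiftL ^ ℓ) a n = a (n + ℓ) := by
  induction ℓ with
  | zero => intro a n; rfl
  | succ i ih =>
    intro a n
    rw [pow_succ, Module.End.mul_apply, ih (shiftL a) n]
    show a (n + i + 1) = a (n + (i + 1))
    ring_nf

lemma applyPoly_eq (P : Polynomial ℂ) (a : ℕ → ℂ) :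
    applyPoly P a = Polynomial.aeval shiftL P a := by
  funext n
  rw [Polynomial.aeval_eq_sum_range, LinearMap.sum_apply]
  simp only [applyPoly, LinearMap.smul_apply, Finset.sum_apply]
  refine Finset.sum_congr rfl fun ℓ _ => ?_
  simp [Pi.smul_apply, smul_eq_mul, shiftL_pow]

lemma applyPoly_mul (P Q : Polynomial ℂ) (a : ℕ → ℂ) :
    applyPoly (P * Q) a = applyPoly P (applyPoly Q a) := by
  simp only [applyPoly_eq, map_mul, Module.End.mul_apply]

lemma applyPoly_one (a : ℕ → ℂ) : applyPoly 1 a = a := by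
  rw [applyPoly_eq, map_one]; rfl

lemma summable_norm_pow_add {p : ℕ} {f g : ℕ → ℂ}
    (hf : Summable fun n => ‖f n‖ ^ p) (hg : Summable fun n => ‖g n‖ ^ p) :
    Summable fun n => ‖f n + g n‖ ^ p := by
  refine Summable.of_nonneg_of_le (fun n => by positivity) (fun n => ?_)
    (((hf.add hg)).mul_left ((2 : ℝ) ^ p))
  have h1 : ‖f n + g n‖ ^ p ≤ (‖f n‖ + ‖g n‖) ^ p :=
    pow_le_pow_left₀ (norm_nonneg _) (norm_add_le _ _) p
  have h2 : (‖f n‖ + ‖g n‖) ^ p ≤ (2 * max ‖f n‖ ‖g n‖) ^ p := by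
    refine pow_le_pow_left₀ (by positivity) ?_ p
    rw [two_mul]
    exact add_le_add (le_max_left _ _) (le_max_right _ _)
  have h4 : max ‖f n‖ ‖g n‖ ^ p ≤ ‖f n‖ ^ p + ‖g n‖ ^ p := by
    rcases max_choice ‖f n‖ ‖g n‖ with h | h <;> rw [h]
    · exact le_add_of_nonneg_right (by positivity)
    · exact le_add_of_nonneg_left (by positivity)
  calc ‖f n + g n‖ ^ p ≤ (2 * max ‖f n‖ ‖g n‖) ^ p := h1.trans h2
    _ = 2 ^ p * max ‖f n‖ ‖g n‖ ^ p := mul_pow _ _ _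
    _ ≤ 2 ^ p * (‖f n‖ ^ p + ‖g n‖ ^ p) :=
        mul_le_mul_of_nonneg_left h4 (by positivity)

lemma summable_norm_pow_finsum {p : ℕ} (hp : 1 ≤ p) {ι : Type*} (s : Finset ι)
    (f : ι → ℕ → ℂ) (h : ∀ i ∈ s, Summable fun n => ‖f i n‖ ^ p) :
    Summable fun n => ‖∑ i ∈ s, f i n‖ ^ p := by
  classical
  induction s using Finset.induction with
  | empty =>
    simp only [Finset.sum_empty, norm_zero, zero_pow (by omega : p ≠ 0)]
    exact summable_zero
  | @insert a s ha ih =>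
    simp only [Finset.sum_insert ha]
    exact summable_norm_pow_add (h a (Finset.mem_insert_self a s))
      (ih fun i hi => h i (Finset.mem_insert_of_mem hi))

lemma summable_norm_pow_shift {p ℓ : ℕ} {a : ℕ → ℂ}
    (h : Summable fun n => ‖a n‖ ^ p) : Summable fun n => ‖a (n + ℓ)‖ ^ p :=
  (summable_nat_add_iff (f := fun n => ‖a n‖ ^ p) ℓ).2 h

lemma summable_applyPoly {p : ℕ} (hp : 1 ≤ p) (P : Polynomial ℂ) {a : ℕ → ℂ}
    (h : Summable fun n => ‖a n‖ ^ p) :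
    Summable fun n => ‖applyPoly P a n‖ ^ p := by
  unfold applyPoly
  refine summable_norm_pow_finsum hp _ _ fun ℓ _ => ?_
  have he : (fun n => ‖P.coeff ℓ * a (n + ℓ)‖ ^ p)
      = fun n => ‖P.coeff ℓ‖ ^ p * ‖a (n + ℓ)‖ ^ p := by
    funext n; rw [norm_mul, mul_pow]
  rw [he]
  exact (summable_norm_pow_shift h).mul_left _

lemma summable_norm_pow_mono {p q : ℕ} (hp : 1 ≤ p) (hpq : p ≤ q) {a : ℕ → ℂ}
    (h : Summable fun n => ‖a n‖ ^ p) : Summable fun n => ‖a n‖ ^ q := by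
  have h0 : Filter.Tendsto (fun n => ‖a n‖ ^ p) Filter.atTop (nhds 0) :=
    h.tendsto_atTop_zero
  have hev : ∀ᶠ n in Filter.atTop, ‖a n‖ ^ p < 1 :=
    h0.eventually (gt_mem_nhds one_pos)
  obtain ⟨N, hN⟩ := Filter.eventually_atTop.1 hev
  rw [← summable_nat_add_iff (f := fun n => ‖a n‖ ^ p) N] at h
  rw [← summable_nat_add_iff (f := fun n => ‖a n‖ ^ q) N]
  refine Summable.of_nonneg_of_le (fun n => by positivity) (fun n => ?_) h
  have h1 : ‖a (n + N)‖ ≤ 1 := by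
    by_contra hc
    push_neg at hc
    have h3 := one_lt_pow₀ hc (by omega : p ≠ 0)
    have h5 := hN (n + N) (by omega)
    linarith
  exact pow_le_pow_of_le_one (norm_nonneg _) h1 hpq

theorem stmt1 (k : ℕ) (hk : 1 ≤ k) (θ : Fin k → ℝ)
    (hθmem : ∀ j, θ j ∈ Set.Ico 0 (2 * Real.pi)) (hθinj : Function.Injective θ)
    (m : Fin k → ℕ) (hm : ∀ j, 1 ≤ m j)
    (α : ℕ → ℂ) (hbdd : ∃ C : ℝ, ∀ n, ‖α n‖ ≤ C) :
    (∃ β : Fin k → ℕ → ℂ,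
        (∀ n, α n = ∑ j, β j n) ∧
        (∀ j, Summable (fun n =>
          ‖applyPoly ((Polynomial.X - Polynomial.C (Complex.exp (θ j * Complex.I))) ^ m j)
              (β j) n‖ ^ (2 : ℕ))) ∧
        (∀ j, Summable (fun n => ‖β j n‖ ^ (2 * m j + 2)))) ↔
      (Summable (fun n =>
          ‖applyPoly (∏ j, (Polynomial.X - Polynomial.C (Complex.exp (θ j * Complex.I))) ^ m j)
              α n‖ ^ (2 : ℕ)) ∧
        (∀ q : Fin k, m q < Finset.univ.sup m → Summable (fun n =>
          ‖applyPoly (∏ j ∈ Finset.univ.erase q,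
              (Polynomial.X - Polynomial.C (Complex.exp (θ j * Complex.I))) ^ m j)
              α n‖ ^ (2 * m q + 2))) ∧
        Summable (fun n => ‖α n‖ ^ (2 * Finset.univ.sup m + 2))) := by
  classical
  haveI : NeZero k := ⟨by omega⟩
  set lam : Fin k → ℂ := fun j => Complex.exp (θ j * Complex.I) with hlam
  have hlaminj : Function.Injective lam := by
    intro i j hij
    apply hθinj
    rw [Complex.exp_eq_exp_iff_exists_int] at hij
    obtain ⟨n, hn⟩ := hij
    have hpi := Real.pi_pos
    obtain ⟨hi0, hi2⟩ := hθmem i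
    obtain ⟨hj0, hj2⟩ := hθmem j
    have him : θ i = θ j + (n : ℝ) * (2 * Real.pi) := by
      have h := congrArg Complex.im hn
      simpa using h
    have hn0 : n = 0 := by
      have habs : |(n : ℝ)| * (2 * Real.pi) < 1 * (2 * Real.pi) := by
        have h1 : (n : ℝ) * (2 * Real.pi) = θ i - θ j := by linarith
        have h2 : |(n : ℝ) * (2 * Real.pi)| < 2 * Real.pi := by
          rw [h1, abs_lt]; constructor <;> linarith
        rw [abs_mul, abs_of_pos (by positivity : (0:ℝ) < 2 * Real.pi)] at h2
        linarith
      have : |(n : ℝ)| < 1 := lt_of_mul_lt_mul_right habs (by positivity)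
      have h9 : (|n| : ℝ) < 1 := by push_cast; exact this
      have h10 : |n| < 1 := by exact_mod_cast h9
      exact Int.abs_lt_one_iff.mp h10
    rw [hn0] at him
    simpa using him
  set s : Fin k → Polynomial ℂ := fun j => (Polynomial.X - Polynomial.C (lam j)) ^ m j with hs
  set M := Finset.univ.sup m with hM
  have hmM : ∀ j, m j ≤ M := fun j => Finset.le_sup (Finset.mem_univ j)
  have hP : ∀ j : Fin k, (∏ i, s i) = s j * ∏ i ∈ Finset.univ.erase j, s i :=
    fun j => (Finset.mul_prod_erase Finset.univ s (Finset.mem_univ j)).symm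
  constructor
  · rintro ⟨β, hsum, hβ2, hβp⟩
    have hαβ : α = ∑ j, β j := by
      funext n; rw [hsum n]; exact (Finset.sum_apply _ _ _).symm
    have happ : ∀ P : Polynomial ℂ, applyPoly P α = fun n => ∑ j, applyPoly P (β j) n := by
      intro P
      funext n
      rw [hαβ, applyPoly_eq, map_sum]
      simp only [Finset.sum_apply, applyPoly_eq, LinearMap.sum_apply]
    refine ⟨?_, ?_, ?_⟩
    · rw [happ]
      refine summable_norm_pow_finsum (by norm_num) _ _ fun j _ => ?_
      have he : applyPoly (∏ i, s i) (β j)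
          = applyPoly (∏ i ∈ Finset.univ.erase j, s i) (applyPoly (s j) (β j)) := by
        rw [hP j, mul_comm (s j), applyPoly_mul]
      rw [he]
      exact summable_applyPoly (by norm_num) _ (hβ2 j)
    · intro q hq
      rw [happ]
      refine summable_norm_pow_finsum (by omega) _ _ fun j _ => ?_
      by_cases hjq : j = q
      · subst hjq
        exact summable_applyPoly (by omega) _ (hβp j)
      · have hfac : (∏ i ∈ Finset.univ.erase q, s i)
            = s j * ∏ i ∈ (Finset.univ.erase q).erase j, s i :=
          (Finset.mul_prod_erase _ s (Finset.mem_erase.2 ⟨hjq, Finset.mem_univ j⟩)).symm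
        rw [hfac, mul_comm (s j), applyPoly_mul]
        exact summable_norm_pow_mono (by norm_num) (by omega)
          (summable_applyPoly (by norm_num) _ (hβ2 j))
    · have he : (fun n => ‖α n‖ ^ (2 * M + 2))
          = fun n => ‖∑ j, β j n‖ ^ (2 * M + 2) := by
        funext n; rw [hsum n]
      rw [he]
      refine summable_norm_pow_finsum (by omega) _ _ fun j _ => ?_
      exact summable_norm_pow_mono (by omega) (by have := hmM j; omega) (hβp j)
  · rintro ⟨h2, hmid, hp⟩
    have hcop : Pairwise (Function.onFun IsCoprime s) := fun i j hij =>
      (Polynomial.pairwise_coprime_X_sub_C hlaminj hij).pow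
    obtain ⟨μ, hμ⟩ := (exists_sum_eq_one_iff_pairwise_coprime' (s := s)).2 hcop
    simp only [Finset.compl_singleton] at hμ
    set Q : Fin k → Polynomial ℂ := fun j => ∏ i ∈ Finset.univ.erase j, s i with hQ
    set β : Fin k → ℕ → ℂ := fun j => applyPoly (μ j * Q j) α with hβ
    have hβj : ∀ j, β j = applyPoly (μ j) (applyPoly (Q j) α) := fun j => applyPoly_mul _ _ _
    refine ⟨β, ?_, ?_, ?_⟩
    · intro n
      have h1 : (∑ j, β j n) = applyPoly (∑ j, μ j * Q j) α n := by
        simp only [hβ, applyPoly_eq, map_sum, LinearMap.sum_apply, Finset.sum_apply]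
      rw [h1, hμ, applyPoly_one]
    · intro j
      have he : applyPoly (s j) (β j) = applyPoly (μ j) (applyPoly (∏ i, s i) α) := by
        have hpoly : s j * (μ j * Q j) = μ j * ∏ i, s i := by rw [hP j]; ring
        rw [hβ]
        show applyPoly (s j) (applyPoly (μ j * Q j) α) = _
        rw [← applyPoly_mul, hpoly, applyPoly_mul]
      have he2 : applyPoly ((Polynomial.X - Polynomial.C (lam j)) ^ m j) (β j)
          = applyPoly (μ j) (applyPoly (∏ i, s i) α) := he
      rw [he2]
      exact summable_applyPoly (by norm_num) _ h2
    · intro j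
      rw [hβj j]
      rcases lt_or_eq_of_le (hmM j) with hlt | heq
      · exact summable_applyPoly (by omega) _ (hmid j hlt)
      · have hQs : Summable fun n => ‖applyPoly (Q j) α n‖ ^ (2 * M + 2) :=
          summable_applyPoly (by omega) _ hp
        rw [heq]
        exact summable_applyPoly (by omega) _ hQs
end

section
/- For every finitely supported sequence α = (α_n)_{n∈ℤ} of complex numbers, ‖(S−1)α‖₃² ≤ 2 ‖(S−1)²α‖₂ ‖α‖₆, i.e. (∑_{n∈ℤ} |α_{n+1} − α_n|³)^{2/3} ≤ 2 (∑_{n∈ℤ} |α_{n+2} − 2α_{n+1} + α_n|²)^{1/2} (∑_{n∈ℤ} |α_n|⁶)^{1/6}. -/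
open scoped BigOperators

lemma aux_conj (x y : ℂ) :
    ‖(‖x‖ : ℂ) * (starRingEnd ℂ) x - (‖y‖ : ℂ) * (starRingEnd ℂ) y‖ ≤ (‖x‖ + ‖y‖) * ‖x - y‖ := by
  have hrw : (‖x‖ : ℂ) * (starRingEnd ℂ) x - (‖y‖ : ℂ) * (starRingEnd ℂ) y
      = (‖x‖ : ℂ) * (starRingEnd ℂ) (x - y) + ((‖x‖ : ℝ) - ‖y‖ : ℝ) * (starRingEnd ℂ) y := by
    push_cast
    rw [map_sub]
    ring
  rw [hrw]
  refine (norm_add_le _ _).trans ?_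
  rw [norm_mul, norm_mul, RCLike.norm_conj, RCLike.norm_conj, Complex.norm_real,
    Complex.norm_real, Real.norm_eq_abs, Real.norm_eq_abs, abs_of_nonneg (norm_nonneg x)]
  have h1 : |‖x‖ - ‖y‖| ≤ ‖x - y‖ := abs_norm_sub_norm_le x y
  nlinarith [norm_nonneg (x - y), norm_nonneg y, norm_nonneg x]

lemma aux_pt (z : ℂ) : z * ((‖z‖ : ℂ) * (starRingEnd ℂ) z) = ((‖z‖ ^ (3 : ℕ) : ℝ) : ℂ) := by
  have := Complex.mul_conj z
  rw [show z * ((‖z‖ : ℂ) * (starRingEnd ℂ) z) = (‖z‖ : ℂ) * (z * (starRingEnd ℂ) z) by ring,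
    this]
  rw [Complex.normSq_eq_norm_sq]
  push_cast
  ring

theorem stmt2 (α : ℤ → ℂ) (hfin : {n : ℤ | α n ≠ 0}.Finite) :
    (∑' n : ℤ, ‖α (n + 1) - α n‖ ^ (3 : ℕ)) ^ ((2 : ℝ) / 3) ≤
      2 * (∑' n : ℤ, ‖α (n + 2) - 2 * α (n + 1) + α n‖ ^ (2 : ℕ)) ^ ((1 : ℝ) / 2) *
        (∑' n : ℤ, ‖α n‖ ^ (6 : ℕ)) ^ ((1 : ℝ) / 6) := by
  classical
  set M : ℕ := hfin.toFinset.sup Int.natAbs with hM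
  have hA0 : ∀ n : ℤ, M < n.natAbs → α n = 0 := by
    intro n hn
    by_contra h
    have hmem : n ∈ hfin.toFinset := by simpa [Set.Finite.mem_toFinset] using h
    have := Finset.le_sup (f := Int.natAbs) hmem
    omega
  set s : Finset ℤ := Finset.Icc (-(M : ℤ) - 3) ((M : ℤ) + 3) with hs
  have hns : ∀ n : ℤ, n ∉ s → M < n.natAbs ∧ M < (n + 1).natAbs ∧ M < (n + 2).natAbs := by
    intro n hn
    rw [hs, Finset.mem_Icc] at hn
    push_neg at hn
    omega
  have hz0 : ∀ n ∉ s, α n = 0 := fun n hn => hA0 n (hns n hn).1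
  have hz1 : ∀ n ∉ s, α (n + 1) = 0 := fun n hn => hA0 _ (hns n hn).2.1
  have hz2 : ∀ n ∉ s, α (n + 2) = 0 := fun n hn => hA0 _ (hns n hn).2.2
  have hb0 : ∀ n ∉ s, α (n + 1) - α n = 0 := fun n hn => by
    rw [hz0 n hn, hz1 n hn, sub_zero]
  have hb1 : ∀ n ∉ s, α (n + 2) - α (n + 1) = 0 := fun n hn => by
    rw [hz1 n hn, hz2 n hn, sub_zero]
  have hc0 : ∀ n ∉ s, α (n + 2) - 2 * α (n + 1) + α n = 0 := fun n hn => by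
    rw [hz0 n hn, hz1 n hn, hz2 n hn]; ring
  set A := ∑ n ∈ s, ‖α n‖ ^ (6 : ℕ) with hA
  set B := ∑ n ∈ s, ‖α (n + 1) - α n‖ ^ (3 : ℕ) with hB
  set C := ∑ n ∈ s, ‖α (n + 2) - 2 * α (n + 1) + α n‖ ^ (2 : ℕ) with hC
  have eT6 : (∑' n : ℤ, ‖α n‖ ^ (6 : ℕ)) = A :=
    tsum_eq_sum (fun n hn => by rw [hz0 n hn]; simp)
  have eT3 : (∑' n : ℤ, ‖α (n + 1) - α n‖ ^ (3 : ℕ)) = B :=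
    tsum_eq_sum (fun n hn => by rw [hb0 n hn]; simp)
  have eT2 : (∑' n : ℤ, ‖α (n + 2) - 2 * α (n + 1) + α n‖ ^ (2 : ℕ)) = C :=
    tsum_eq_sum (fun n hn => by rw [hc0 n hn]; simp)
  rw [eT3, eT2, eT6]
  have hA0' : (0 : ℝ) ≤ A := Finset.sum_nonneg fun n _ => by positivity
  have hB0' : (0 : ℝ) ≤ B := Finset.sum_nonneg fun n _ => by positivity
  have hC0' : (0 : ℝ) ≤ C := Finset.sum_nonneg fun n _ => by positivity
  have hadd : ∀ m : ℤ, m + 1 + 1 = m + 2 := fun m => by ring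
  -- shifted sums
  have shift6 : ∑ n ∈ s, ‖α (n + 1)‖ ^ (6 : ℕ) = A := by
    have e2 : ∑' n : ℤ, ‖α (n + 1)‖ ^ (6 : ℕ) = ∑' n : ℤ, ‖α n‖ ^ (6 : ℕ) :=
      (Equiv.addRight (1 : ℤ)).tsum_eq (fun n => ‖α n‖ ^ (6 : ℕ))
    rw [← tsum_eq_sum (L := SummationFilter.unconditional ℤ) (fun n hn => by simp [hz1 n hn]), e2, eT6]
  have shiftb : ∑ n ∈ s, ‖α (n + 2) - α (n + 1)‖ ^ (3 : ℕ) = B := by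
    have e2 : ∑' n : ℤ, ‖α (n + 2) - α (n + 1)‖ ^ (3 : ℕ)
        = ∑' n : ℤ, ‖α (n + 1) - α n‖ ^ (3 : ℕ) := by
      have := (Equiv.addRight (1 : ℤ)).tsum_eq (fun n => ‖α (n + 1) - α n‖ ^ (3 : ℕ))
      simpa [hadd] using this
    rw [← tsum_eq_sum (L := SummationFilter.unconditional ℤ) (fun n hn => by simp [hb1 n hn]), e2, eT3]
  -- the auxiliary sequence g n = ‖b n‖ * conj (b n)
  set g : ℤ → ℂ := fun n => (‖α (n + 1) - α n‖ : ℂ) * (starRingEnd ℂ) (α (n + 1) - α n)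
    with hg
  have hgz : ∀ n ∉ s, g n = 0 := fun n hn => by simp [hg, hb0 n hn]
  have hgz1 : ∀ n ∉ s, g (n + 1) = 0 := fun n hn => by
    simp [hg, hadd n, hb1 n hn]
  -- Abel summation
  have key1 : ((B : ℝ) : ℂ) = ∑ n ∈ s, (α (n + 1) - α n) * g n := by
    rw [hB]
    push_cast
    refine Finset.sum_congr rfl fun n _ => ?_
    rw [hg]
    have := aux_pt (α (n + 1) - α n)
    push_cast at this
    rw [this]
  have sm1 : Summable (fun n : ℤ => α (n + 1) * g n) :=
    summable_of_ne_finset_zero (s := s) (fun n hn => by rw [hgz n hn, mul_zero])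
  have sm2 : Summable (fun n : ℤ => α n * g n) :=
    summable_of_ne_finset_zero (s := s) (fun n hn => by rw [hgz n hn, mul_zero])
  have sm3 : Summable (fun n : ℤ => α (n + 1) * g (n + 1)) :=
    summable_of_ne_finset_zero (s := s) (fun n hn => by rw [hgz1 n hn, mul_zero])
  have key2 : ∑ n ∈ s, (α (n + 1) - α n) * g n
      = - ∑' n : ℤ, α (n + 1) * (g (n + 1) - g n) := by
    calc ∑ n ∈ s, (α (n + 1) - α n) * g n
        = ∑' n : ℤ, (α (n + 1) * g n - α n * g n) := by
          rw [tsum_eq_sum (s := s) (fun n hn => by rw [hgz n hn]; ring)]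
          exact Finset.sum_congr rfl fun n _ => by ring
      _ = (∑' n : ℤ, α (n + 1) * g n) - ∑' n : ℤ, α n * g n := Summable.tsum_sub sm1 sm2
      _ = (∑' n : ℤ, α (n + 1) * g n) - ∑' n : ℤ, α (n + 1) * g (n + 1) := by
          congr 1
          exact ((Equiv.addRight (1 : ℤ)).tsum_eq (fun n => α n * g n)).symm
      _ = ∑' n : ℤ, (α (n + 1) * g n - α (n + 1) * g (n + 1)) := (Summable.tsum_sub sm1 sm3).symm
      _ = - ∑' n : ℤ, α (n + 1) * (g (n + 1) - g n) := by
          rw [← tsum_neg]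
          exact tsum_congr fun n => by ring
  have key3 : B ≤ ∑ n ∈ s, ‖α (n + 1) * (g (n + 1) - g n)‖ := by
    have smn : Summable (fun n : ℤ => ‖α (n + 1) * (g (n + 1) - g n)‖) :=
      summable_of_ne_finset_zero (s := s)
        (fun n hn => by rw [hgz n hn, hgz1 n hn]; simp)
    have hBnorm : B = ‖((B : ℝ) : ℂ)‖ := by
      rw [Complex.norm_real, Real.norm_eq_abs, abs_of_nonneg hB0']
    rw [hBnorm, key1, key2, norm_neg]
    calc ‖∑' n : ℤ, α (n + 1) * (g (n + 1) - g n)‖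
        ≤ ∑' n : ℤ, ‖α (n + 1) * (g (n + 1) - g n)‖ := norm_tsum_le_tsum_norm smn
      _ = ∑ n ∈ s, ‖α (n + 1) * (g (n + 1) - g n)‖ :=
          tsum_eq_sum (fun n hn => by rw [hgz n hn, hgz1 n hn]; simp)
  -- pointwise bound
  have key4 : B ≤ ∑ n ∈ s, ‖α (n + 1)‖ *
      ((‖α (n + 2) - α (n + 1)‖ + ‖α (n + 1) - α n‖) *
        ‖α (n + 2) - 2 * α (n + 1) + α n‖) := by
    refine key3.trans (Finset.sum_le_sum fun n _ => ?_)
    rw [norm_mul]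
    refine mul_le_mul_of_nonneg_left ?_ (norm_nonneg _)
    have h1 : g (n + 1) - g n
        = (‖α (n + 2) - α (n + 1)‖ : ℂ) * (starRingEnd ℂ) (α (n + 2) - α (n + 1))
          - (‖α (n + 1) - α n‖ : ℂ) * (starRingEnd ℂ) (α (n + 1) - α n) := by
      simp [hg, hadd n]
    rw [h1]
    refine (aux_conj _ _).trans (le_of_eq ?_)
    congr 1
    congr 1
    ring
  -- notation for the middle factor
  set v : ℤ → ℝ := fun n => ‖α (n + 2) - α (n + 1)‖ + ‖α (n + 1) - α n‖ with hv
  have hvnn : ∀ n, 0 ≤ v n := fun n => add_nonneg (norm_nonneg _) (norm_nonneg _)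
  -- Cauchy-Schwarz
  have hold1 : ∑ n ∈ s, ‖α (n + 1)‖ * (v n * ‖α (n + 2) - 2 * α (n + 1) + α n‖) ≤
      (∑ n ∈ s, (‖α (n + 1)‖ * v n) ^ (2 : ℝ)) ^ ((1 : ℝ)/2) *
        (∑ n ∈ s, ‖α (n + 2) - 2 * α (n + 1) + α n‖ ^ (2 : ℝ)) ^ ((1 : ℝ)/2) := by
    have h2 := Real.inner_le_Lp_mul_Lq_of_nonneg (s := s) (p := 2) (q := 2)
      (f := fun n => ‖α (n + 1)‖ * v n)
      (g := fun n => ‖α (n + 2) - 2 * α (n + 1) + α n‖)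
      ⟨by norm_num, by norm_num, by norm_num⟩
      (fun n _ => mul_nonneg (norm_nonneg _) (hvnn n))
      (fun n _ => norm_nonneg _)
    calc ∑ n ∈ s, ‖α (n + 1)‖ * (v n * ‖α (n + 2) - 2 * α (n + 1) + α n‖)
        = ∑ n ∈ s, (‖α (n + 1)‖ * v n) * ‖α (n + 2) - 2 * α (n + 1) + α n‖ :=
          Finset.sum_congr rfl fun n _ => by ring
      _ ≤ _ := by convert h2 using 3 <;> norm_num
  -- Hölder with exponents 3 and 3/2
  have hold2 : ∑ n ∈ s, (‖α (n + 1)‖ * v n) ^ (2 : ℝ) ≤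
      (∑ n ∈ s, ‖α (n + 1)‖ ^ (6 : ℝ)) ^ ((1 : ℝ)/3) *
        (∑ n ∈ s, v n ^ (3 : ℝ)) ^ ((2 : ℝ)/3) := by
    have h2 := Real.inner_le_Lp_mul_Lq_of_nonneg (s := s) (p := 3) (q := 3/2)
      (f := fun n => ‖α (n + 1)‖ ^ (2 : ℝ)) (g := fun n => v n ^ (2 : ℝ))
      ⟨by norm_num, by norm_num, by norm_num⟩
      (fun n _ => Real.rpow_nonneg (norm_nonneg _) _)
      (fun n _ => Real.rpow_nonneg (hvnn n) _)
    calc ∑ n ∈ s, (‖α (n + 1)‖ * v n) ^ (2 : ℝ)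
        = ∑ n ∈ s, ‖α (n + 1)‖ ^ (2 : ℝ) * v n ^ (2 : ℝ) :=
          Finset.sum_congr rfl fun n _ =>
            Real.mul_rpow (norm_nonneg _) (hvnn n)
      _ ≤ (∑ n ∈ s, (‖α (n + 1)‖ ^ (2 : ℝ)) ^ (3 : ℝ)) ^ ((1:ℝ)/3) *
            (∑ n ∈ s, (v n ^ (2 : ℝ)) ^ ((3 : ℝ)/2)) ^ ((1:ℝ)/(3/2)) := h2
      _ = _ := by
          congr 2
          · exact Finset.sum_congr rfl fun n _ => by
              rw [← Real.rpow_mul (norm_nonneg _)]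
              norm_num
          · exact Finset.sum_congr rfl fun n _ => by
              rw [← Real.rpow_mul (hvnn n)]
              norm_num
          · norm_num
  -- Minkowski
  have mink : (∑ n ∈ s, v n ^ (3 : ℝ)) ^ ((1 : ℝ)/3) ≤ 2 * B ^ ((1 : ℝ)/3) := by
    have h2 := Real.Lp_add_le s (fun n => ‖α (n + 2) - α (n + 1)‖)
      (fun n => ‖α (n + 1) - α n‖) (p := 3) (by norm_num)
    have e1 : ∑ n ∈ s, |‖α (n + 2) - α (n + 1)‖ + ‖α (n + 1) - α n‖| ^ (3:ℝ)
        = ∑ n ∈ s, v n ^ (3 : ℝ) :=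
      Finset.sum_congr rfl fun n _ => by rw [abs_of_nonneg (hvnn n)]
    have e2 : ∑ n ∈ s, |(fun n => ‖α (n + 2) - α (n + 1)‖) n| ^ (3:ℝ) = B := by
      rw [← shiftb]
      refine Finset.sum_congr rfl fun n _ => ?_
      rw [abs_of_nonneg (norm_nonneg _), ← Real.rpow_natCast (‖α (n+2) - α (n+1)‖) 3]
      norm_num
    have e3 : ∑ n ∈ s, |(fun n => ‖α (n + 1) - α n‖) n| ^ (3:ℝ) = B := by
      rw [hB]
      refine Finset.sum_congr rfl fun n _ => ?_
      rw [abs_of_nonneg (norm_nonneg _), ← Real.rpow_natCast (‖α (n+1) - α n‖) 3]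
      norm_num
    rw [e2, e3] at h2
    calc (∑ n ∈ s, v n ^ (3 : ℝ)) ^ ((1 : ℝ)/3)
        = (∑ n ∈ s, |‖α (n + 2) - α (n + 1)‖ + ‖α (n + 1) - α n‖| ^ (3:ℝ)) ^ ((1:ℝ)/3) := by
          rw [e1]
      _ ≤ B ^ ((1:ℝ)/3) + B ^ ((1:ℝ)/3) := h2
      _ = 2 * B ^ ((1 : ℝ)/3) := by ring
  -- identify the remaining sums
  have e6 : ∑ n ∈ s, ‖α (n + 1)‖ ^ (6 : ℝ) = A := by
    rw [← shift6]
    refine Finset.sum_congr rfl fun n _ => ?_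
    rw [← Real.rpow_natCast (‖α (n+1)‖) 6]; norm_num
  have e2' : ∑ n ∈ s, ‖α (n + 2) - 2 * α (n + 1) + α n‖ ^ (2 : ℝ) = C := by
    rw [hC]
    refine Finset.sum_congr rfl fun n _ => ?_
    rw [← Real.rpow_natCast (‖α (n+2) - 2 * α (n+1) + α n‖) 2]; norm_num
  rw [e6] at hold2
  rw [e2'] at hold1
  -- nonnegativity of intermediate sums
  have hXnn : (0:ℝ) ≤ ∑ n ∈ s, (‖α (n + 1)‖ * v n) ^ (2 : ℝ) :=
    Finset.sum_nonneg fun n _ => Real.rpow_nonneg (mul_nonneg (norm_nonneg _) (hvnn n)) _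
  have hYnn : (0:ℝ) ≤ ∑ n ∈ s, v n ^ (3 : ℝ) :=
    Finset.sum_nonneg fun n _ => Real.rpow_nonneg (hvnn n) _
  -- combine
  have main : B ≤ (2 * C ^ ((1:ℝ)/2) * A ^ ((1:ℝ)/6)) * B ^ ((1:ℝ)/3) := by
    have step1 : B ≤ (∑ n ∈ s, (‖α (n + 1)‖ * v n) ^ (2 : ℝ)) ^ ((1 : ℝ)/2) *
        C ^ ((1 : ℝ)/2) := key4.trans hold1
    have step2 : (∑ n ∈ s, (‖α (n + 1)‖ * v n) ^ (2 : ℝ)) ^ ((1 : ℝ)/2) ≤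
        A ^ ((1:ℝ)/6) * (2 * B ^ ((1:ℝ)/3)) := by
      calc (∑ n ∈ s, (‖α (n + 1)‖ * v n) ^ (2 : ℝ)) ^ ((1 : ℝ)/2)
          ≤ (A ^ ((1 : ℝ)/3) * (∑ n ∈ s, v n ^ (3 : ℝ)) ^ ((2 : ℝ)/3)) ^ ((1:ℝ)/2) :=
            Real.rpow_le_rpow hXnn hold2 (by norm_num)
        _ = A ^ ((1:ℝ)/6) * ((∑ n ∈ s, v n ^ (3 : ℝ)) ^ ((1:ℝ)/3)) := by
            rw [Real.mul_rpow (Real.rpow_nonneg hA0' _) (Real.rpow_nonneg hYnn _),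
              ← Real.rpow_mul hA0', ← Real.rpow_mul hYnn]
            norm_num
        _ ≤ A ^ ((1:ℝ)/6) * (2 * B ^ ((1:ℝ)/3)) :=
            mul_le_mul_of_nonneg_left mink (Real.rpow_nonneg hA0' _)
    calc B ≤ (∑ n ∈ s, (‖α (n + 1)‖ * v n) ^ (2 : ℝ)) ^ ((1 : ℝ)/2) *
          C ^ ((1 : ℝ)/2) := step1
      _ ≤ (A ^ ((1:ℝ)/6) * (2 * B ^ ((1:ℝ)/3))) * C ^ ((1 : ℝ)/2) :=
          mul_le_mul_of_nonneg_right step2 (Real.rpow_nonneg hC0' _)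
      _ = (2 * C ^ ((1:ℝ)/2) * A ^ ((1:ℝ)/6)) * B ^ ((1:ℝ)/3) := by ring
  -- conclude
  rcases eq_or_lt_of_le hB0' with h0 | hBpos
  · rw [← h0, Real.zero_rpow (by norm_num)]
    have := mul_nonneg (mul_nonneg (by norm_num : (0:ℝ) ≤ 2)
      (Real.rpow_nonneg hC0' ((1:ℝ)/2))) (Real.rpow_nonneg hA0' ((1:ℝ)/6))
    convert this using 2 <;> norm_num
  · have h13 : (0:ℝ) < B ^ ((1:ℝ)/3) := Real.rpow_pos_of_pos hBpos _
    have hmul : B ^ ((2:ℝ)/3) * B ^ ((1:ℝ)/3) = B := by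
      rw [← Real.rpow_add hBpos]; norm_num
    have : B ^ ((2:ℝ)/3) * B ^ ((1:ℝ)/3) ≤
        (2 * C ^ ((1:ℝ)/2) * A ^ ((1:ℝ)/6)) * B ^ ((1:ℝ)/3) := by
      rw [hmul]; exact main
    exact le_of_mul_le_mul_right this h13
end

section
/- Let k ≥ 1 be an integer and let p be an integer with 1 ≤ p ≤ k. For every finitely supported sequence α = (α_n)_{n∈ℤ} of complex numbers, ‖(S−1)α‖_{2k/p}² ≤ ((2k−p)/p) ‖(S−1)²α‖_{2k/(p+1)} ‖α‖_{2k/(p−1)}, where for p = 1 the exponent 2k/(p−1) = ∞ is interpreted as the supremum norm ‖α‖_∞ = sup_n |α_n|. -/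
open scoped BigOperators

noncomputable def phiQ (Q : ℝ) (u : ℂ) : ℂ := ((‖u‖ ^ (Q - 2) : ℝ) : ℂ) * (starRingEnd ℂ) u

noncomputable def Dphi (Q : ℝ) (w v : ℂ) (t : ℝ) : ℂ :=
  if w + t • v = 0 then 0 else
    (((Q - 2) * ‖w + t • v‖ ^ (Q - 4) * (((starRingEnd ℂ) (w + t • v)) * v).re : ℝ) : ℂ) *
        (starRingEnd ℂ) (w + t • v)
      + ((‖w + t • v‖ ^ (Q - 2) : ℝ) : ℂ) * ((starRingEnd ℂ) v)

lemma norm_phiQ {Q : ℝ} (hQ : 2 ≤ Q) (u : ℂ) : ‖phiQ Q u‖ = ‖u‖ ^ (Q - 1) := by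
  rcases eq_or_ne u 0 with rfl | hu
  · simp [phiQ, Real.zero_rpow (by linarith : Q - 1 ≠ 0)]
  · have h0 : (0:ℝ) < ‖u‖ := norm_pos_iff.2 hu
    rw [phiQ, norm_mul, Complex.norm_real, RCLike.norm_conj, Real.norm_eq_abs,
      abs_of_nonneg (Real.rpow_nonneg (norm_nonneg u) _)]
    nth_rewrite 2 [← Real.rpow_one ‖u‖]
    rw [← Real.rpow_add h0]
    congr 1
    ring

lemma mul_phiQ {Q : ℝ} (hQ : 2 ≤ Q) (u : ℂ) : u * phiQ Q u = ((‖u‖ ^ Q : ℝ) : ℂ) := by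
  rcases eq_or_ne u 0 with rfl | hu
  · simp [phiQ, Real.zero_rpow (by linarith : Q ≠ 0)]
  · have h0 : (0:ℝ) < ‖u‖ := norm_pos_iff.2 hu
    rw [phiQ, mul_comm, mul_assoc, Complex.conj_mul']
    rw [← Complex.ofReal_pow, ← Complex.ofReal_mul, ← Real.rpow_natCast ‖u‖ 2,
      ← Real.rpow_add h0]
    congr 1
    ring

lemma normSq_rpow (Q : ℝ) (u : ℂ) : (Complex.normSq u) ^ ((Q - 2)/2) = ‖u‖ ^ (Q - 2) := by
  rw [Complex.normSq_eq_norm_sq, ← Real.rpow_natCast ‖u‖ 2,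
    ← Real.rpow_mul (norm_nonneg u)]
  congr 1
  ring

lemma normSq_rpow' (Q : ℝ) (u : ℂ) : (Complex.normSq u) ^ ((Q - 2)/2 - 1) = ‖u‖ ^ (Q - 4) := by
  rw [Complex.normSq_eq_norm_sq, ← Real.rpow_natCast ‖u‖ 2,
    ← Real.rpow_mul (norm_nonneg u)]
  congr 1
  ring

lemma hasDerivAt_normSq_line (w v : ℂ) (t : ℝ) :
    HasDerivAt (fun s : ℝ => Complex.normSq (w + s • v))
      (2 * (((starRingEnd ℂ) (w + t • v)) * v).re) t := by
  have h : (fun s : ℝ => Complex.normSq (w + s • v)) =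
      fun s : ℝ => (w.re + s * v.re) ^ 2 + (w.im + s * v.im) ^ 2 := by
    funext s
    simp [Complex.normSq_apply, Complex.real_smul, Complex.add_re, Complex.add_im,
      Complex.mul_re, Complex.mul_im]
    ring
  rw [h]
  have h1 : HasDerivAt (fun s : ℝ => (w.re + s * v.re) ^ 2)
      ((2:ℕ) * (w.re + id t * v.re) ^ (2-1) * (1 * v.re)) t :=
    (((hasDerivAt_id t).mul_const v.re).const_add w.re).pow 2
  have h2 : HasDerivAt (fun s : ℝ => (w.im + s * v.im) ^ 2)
      ((2:ℕ) * (w.im + id t * v.im) ^ (2-1) * (1 * v.im)) t :=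
    (((hasDerivAt_id t).mul_const v.im).const_add w.im).pow 2
  have := h1.add h2
  change HasDerivAt (fun s : ℝ => (w.re + s * v.re) ^ 2 + (w.im + s * v.im) ^ 2) _ t at this
  convert this using 1
  simp [Complex.mul_re, Complex.add_re, Complex.add_im, Complex.real_smul]
  ring

lemma phiQ_zero (Q : ℝ) : phiQ Q 0 = 0 := by simp [phiQ]

lemma hasDerivAt_phi_line {Q : ℝ} (hQ : 2 < Q) (w v : ℂ) (t : ℝ) :
    HasDerivAt (fun s : ℝ => phiQ Q (w + s • v)) (Dphi Q w v t) t := by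
  by_cases hγ : w + t • v = 0
  · rw [Dphi, if_pos hγ]
    rcases eq_or_ne v 0 with rfl | hv
    · simp only [smul_zero, add_zero]
      exact hasDerivAt_const t _
    · have hws : ∀ s : ℝ, w + s • v = (s - t) • v := by
        intro s
        have hw : w = -(t • v) := by linear_combination (norm := module) hγ
        rw [hw, sub_smul]; module
      rw [hasDerivAt_iff_tendsto_slope]
      have hslope : ∀ s : ℝ, s ≠ t →
          ‖slope (fun s : ℝ => phiQ Q (w + s • v)) t s‖ ≤ |s - t| ^ (Q - 2) * ‖v‖ ^ (Q - 1) := by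
        intro s hs
        have hst : (0:ℝ) < |s - t| := abs_pos.2 (sub_ne_zero.2 hs)
        rw [show slope (fun s : ℝ => phiQ Q (w + s • v)) t s =
            (s - t)⁻¹ • (phiQ Q (w + s • v) - phiQ Q (w + t • v)) from rfl]
        rw [hws s, hγ, phiQ_zero, sub_zero, norm_smul,
          norm_inv, Real.norm_eq_abs, norm_phiQ (le_of_lt hQ), norm_smul, Real.norm_eq_abs,
          Real.mul_rpow (abs_nonneg _) (norm_nonneg _)]
        rw [← mul_assoc, ← Real.rpow_neg_one |s - t|, ← Real.rpow_add hst]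
        have : -1 + (Q - 1) = Q - 2 := by ring
        rw [this]
      have hg : Filter.Tendsto (fun s : ℝ => |s - t| ^ (Q - 2) * ‖v‖ ^ (Q - 1)) (nhds t)
          (nhds 0) := by
        have h1 : Filter.Tendsto (fun s : ℝ => |s - t|) (nhds t) (nhds 0) := by
          have := (continuous_abs.comp (continuous_id.sub (continuous_const (y := t)))).tendsto t
          simpa [Function.comp_def] using this
        have h2 := ((Real.continuousAt_rpow_const 0 (Q - 2)
          (Or.inr (by linarith))).tendsto.comp h1)
        have h3 := h2.mul_const (‖v‖ ^ (Q - 1))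
        simpa [Real.zero_rpow (show Q - 2 ≠ 0 by linarith)] using h3
      exact squeeze_zero_norm' (by
        filter_upwards [self_mem_nhdsWithin] with s hs
        exact hslope s hs) (hg.mono_left nhdsWithin_le_nhds)
  · -- nonvanishing case
    have hn0 : Complex.normSq (w + t • v) ≠ 0 := by
      simpa [Complex.normSq_eq_zero] using hγ
    have hn := hasDerivAt_normSq_line w v t
    have hρ : HasDerivAt (fun s : ℝ => (Complex.normSq (w + s • v)) ^ ((Q - 2)/2))
        ((2 * (((starRingEnd ℂ) (w + t • v)) * v).re) * ((Q - 2)/2) *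
          (Complex.normSq (w + t • v)) ^ ((Q - 2)/2 - 1)) t :=
      hn.rpow_const (Or.inl hn0)
    have hc : HasDerivAt (fun s : ℝ => (starRingEnd ℂ) w + s • (starRingEnd ℂ) v)
        ((starRingEnd ℂ) v) t := by
      simpa using ((hasDerivAt_id t).smul_const ((starRingEnd ℂ) v)).const_add ((starRingEnd ℂ) w)
    have hψ := (hρ.ofReal_comp).mul hc
    have hconj : ∀ s : ℝ, (starRingEnd ℂ) (w + s • v) =
        (starRingEnd ℂ) w + s • (starRingEnd ℂ) v := fun s => by
      rw [map_add, Complex.real_smul, map_mul, Complex.conj_ofReal, Complex.real_smul]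
    have hfun : (fun s : ℝ => ((((Complex.normSq (w + s • v)) ^ ((Q - 2)/2) : ℝ)) : ℂ) *
        ((starRingEnd ℂ) w + s • (starRingEnd ℂ) v)) = fun s : ℝ => phiQ Q (w + s • v) := by
      funext s
      rw [normSq_rpow, phiQ, hconj s]
    change HasDerivAt (fun s : ℝ => ((((Complex.normSq (w + s • v)) ^ ((Q - 2)/2) : ℝ)) : ℂ) *
        ((starRingEnd ℂ) w + s • (starRingEnd ℂ) v)) _ t at hψ
    rw [hfun] at hψ
    convert hψ using 1
    rw [Dphi, if_neg hγ, normSq_rpow, normSq_rpow', ← hconj t]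
    push_cast
    ring

lemma norm_Dphi_le {Q : ℝ} (hQ : 2 < Q) (w v : ℂ) (t : ℝ) :
    ‖Dphi Q w v t‖ ≤ (Q - 1) * ‖w + t • v‖ ^ (Q - 2) * ‖v‖ := by
  set γ := w + t • v with hγdef
  by_cases hγ : γ = 0
  · rw [Dphi, if_pos hγ]
    simp only [norm_zero]
    apply mul_nonneg (mul_nonneg (by linarith) (Real.rpow_nonneg (norm_nonneg _) _)) (norm_nonneg _)
  · have hpos : (0:ℝ) < ‖γ‖ := norm_pos_iff.2 hγ
    rw [Dphi, if_neg hγ]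
    have hre : |(((starRingEnd ℂ) γ) * v).re| ≤ ‖γ‖ * ‖v‖ := by
      calc |(((starRingEnd ℂ) γ) * v).re| ≤ ‖((starRingEnd ℂ) γ) * v‖ :=
            Complex.abs_re_le_norm _
        _ = ‖γ‖ * ‖v‖ := by
            rw [norm_mul, RCLike.norm_conj]
    have h1 : ‖(((Q - 2) * ‖γ‖ ^ (Q - 4) * (((starRingEnd ℂ) γ) * v).re : ℝ) : ℂ) *
        (starRingEnd ℂ) γ‖ ≤ (Q - 2) * ‖γ‖ ^ (Q - 2) * ‖v‖ := by
      rw [norm_mul, Complex.norm_real, RCLike.norm_conj, Real.norm_eq_abs, abs_mul, abs_mul,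
        abs_of_nonneg (by linarith : (0:ℝ) ≤ Q - 2),
        abs_of_nonneg (Real.rpow_nonneg (norm_nonneg γ) _)]
      have key : ‖γ‖ ^ (Q - 4) * (‖γ‖ * ‖v‖) * ‖γ‖ = ‖γ‖ ^ (Q - 2) * ‖v‖ := by
        rw [show (Q - 2) = Q - 4 + 1 + 1 by ring, Real.rpow_add hpos, Real.rpow_add hpos,
          Real.rpow_one]
        ring
      calc (Q - 2) * ‖γ‖ ^ (Q - 4) * |(((starRingEnd ℂ) γ) * v).re| * ‖γ‖
          ≤ (Q - 2) * ‖γ‖ ^ (Q - 4) * (‖γ‖ * ‖v‖) * ‖γ‖ := by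
            have h2 : (0:ℝ) ≤ (Q - 2) * ‖γ‖ ^ (Q - 4) :=
              mul_nonneg (by linarith) (Real.rpow_nonneg (norm_nonneg _) _)
            exact mul_le_mul_of_nonneg_right (mul_le_mul_of_nonneg_left hre h2) (norm_nonneg γ)
        _ = (Q - 2) * (‖γ‖ ^ (Q - 2) * ‖v‖) := by rw [mul_assoc (Q-2), mul_assoc (Q-2), key]
        _ = (Q - 2) * ‖γ‖ ^ (Q - 2) * ‖v‖ := by ring
    have h2 : ‖((‖γ‖ ^ (Q - 2) : ℝ) : ℂ) * (starRingEnd ℂ) v‖ = ‖γ‖ ^ (Q - 2) * ‖v‖ := by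
      rw [norm_mul, Complex.norm_real, RCLike.norm_conj, Real.norm_eq_abs,
        abs_of_nonneg (Real.rpow_nonneg (norm_nonneg γ) _)]
    calc ‖_ + _‖ ≤ _ := norm_add_le _ _
      _ ≤ (Q - 2) * ‖γ‖ ^ (Q - 2) * ‖v‖ + ‖γ‖ ^ (Q - 2) * ‖v‖ := by rw [h2]; exact add_le_add_left h1 _
      _ = (Q - 1) * ‖γ‖ ^ (Q - 2) * ‖v‖ := by ring

lemma norm_line_le (w z : ℂ) {t : ℝ} (h0 : 0 ≤ t) (h1 : t ≤ 1) :
    ‖w + t • (z - w)‖ ≤ (1 - t) * ‖w‖ + t * ‖z‖ := by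
  have : w + t • (z - w) = (1 - t) • w + t • z := by
    rw [smul_sub, sub_smul]; module
  rw [this]
  calc ‖(1 - t) • w + t • z‖ ≤ ‖(1 - t) • w‖ + ‖t • z‖ := norm_add_le _ _
    _ = (1 - t) * ‖w‖ + t * ‖z‖ := by
      rw [norm_smul, norm_smul, Real.norm_eq_abs, Real.norm_eq_abs,
        abs_of_nonneg (by linarith), abs_of_nonneg h0]

lemma keyC {Q : ℝ} (hQ : 2 < Q) (z w : ℂ) :
    ‖phiQ Q z - phiQ Q w‖ ≤
      (Q - 1) * ‖z - w‖ * ∫ t in (0:ℝ)..1, ((1 - t) * ‖w‖ + t * ‖z‖) ^ (Q - 2) := by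
  set v := z - w with hv
  have hcont : Continuous fun t : ℝ => ((1 - t) * ‖w‖ + t * ‖z‖) ^ (Q - 2) := by
    apply Continuous.rpow_const
    · continuity
    · exact fun _ => Or.inr (by linarith)
  -- derivative facts
  have hd : ∀ t : ℝ, HasDerivAt (fun s : ℝ => phiQ Q (w + s • v)) (Dphi Q w v t) t :=
    fun t => hasDerivAt_phi_line hQ w v t
  have hDeq : (fun t => Dphi Q w v t) = deriv (fun s : ℝ => phiQ Q (w + s • v)) :=
    funext fun t => ((hd t).deriv).symm
  have hboundIcc : ∀ t ∈ Set.Icc (0:ℝ) 1,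
      ‖Dphi Q w v t‖ ≤ (Q - 1) * ‖v‖ * ((1 - t) * ‖w‖ + t * ‖z‖) ^ (Q - 2) := by
    intro t ht
    calc ‖Dphi Q w v t‖ ≤ (Q - 1) * ‖w + t • v‖ ^ (Q - 2) * ‖v‖ := norm_Dphi_le hQ w v t
      _ ≤ (Q - 1) * ((1 - t) * ‖w‖ + t * ‖z‖) ^ (Q - 2) * ‖v‖ := by
          apply mul_le_mul_of_nonneg_right _ (norm_nonneg v)
          apply mul_le_mul_of_nonneg_left _ (by linarith : (0:ℝ) ≤ Q - 1)
          exact Real.rpow_le_rpow (norm_nonneg _) (norm_line_le w z ht.1 ht.2)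
            (by linarith)
      _ = (Q - 1) * ‖v‖ * ((1 - t) * ‖w‖ + t * ‖z‖) ^ (Q - 2) := by ring
  have hgcont : Continuous fun t : ℝ => (Q - 1) * ‖v‖ * ((1 - t) * ‖w‖ + t * ‖z‖) ^ (Q - 2) :=
    continuous_const.mul hcont
  have hInt : IntervalIntegrable (fun t => Dphi Q w v t) MeasureTheory.volume 0 1 := by
    apply IntervalIntegrable.mono_fun' (hgcont.intervalIntegrable 0 1)
    · rw [hDeq]
      exact (measurable_deriv _).aestronglyMeasurable.restrict
    · apply MeasureTheory.ae_restrict_of_forall_mem measurableSet_uIoc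
      intro t ht
      have ht' : t ∈ Set.Icc (0:ℝ) 1 := by
        rw [Set.uIoc_of_le (by norm_num : (0:ℝ) ≤ 1)] at ht
        exact ⟨le_of_lt ht.1, ht.2⟩
      exact hboundIcc t ht'
  have heq : phiQ Q z - phiQ Q w = ∫ t in (0:ℝ)..1, Dphi Q w v t := by
    have := intervalIntegral.integral_eq_sub_of_hasDerivAt
      (f := fun s : ℝ => phiQ Q (w + s • v)) (fun t _ => hd t) hInt
    rw [this]
    norm_num
    rw [hv]
    ring_nf
  rw [heq]
  calc ‖∫ t in (0:ℝ)..1, Dphi Q w v t‖ ≤ ∫ t in (0:ℝ)..1, ‖Dphi Q w v t‖ :=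
        intervalIntegral.norm_integral_le_integral_norm (by norm_num)
    _ ≤ ∫ t in (0:ℝ)..1, (Q - 1) * ‖v‖ * ((1 - t) * ‖w‖ + t * ‖z‖) ^ (Q - 2) := by
        apply intervalIntegral.integral_mono_on (by norm_num) hInt.norm
          (hgcont.intervalIntegrable 0 1)
        exact hboundIcc
    _ = (Q - 1) * ‖v‖ * ∫ t in (0:ℝ)..1, ((1 - t) * ‖w‖ + t * ‖z‖) ^ (Q - 2) :=
        intervalIntegral.integral_const_mul _ _


lemma abel_sum (u w : ℤ → ℂ) (h1 : Summable (fun n => u (n+1) * w n))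
    (h2 : Summable (fun n => u n * w n)) (h3 : Summable fun n => u n * w (n-1)) :
    ∑' n : ℤ, (u (n+1) - u n) * w n = ∑' n : ℤ, u n * (w (n - 1) - w n) := by
  have e1 : ∑' n : ℤ, u (n+1) * w n = ∑' n : ℤ, u n * w (n - 1) := by
    have := (Equiv.addRight (1:ℤ)).tsum_eq (f := fun m : ℤ => u m * w (m - 1))
    rw [← this]
    apply tsum_congr; intro n; simp
  calc ∑' n : ℤ, (u (n+1) - u n) * w n = ∑' n : ℤ, (u (n+1) * w n - u n * w n) := by
        apply tsum_congr; intro n; ring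
    _ = (∑' n : ℤ, u (n+1) * w n) - ∑' n : ℤ, u n * w n := h1.tsum_sub h2
    _ = (∑' n : ℤ, u n * w (n-1)) - ∑' n : ℤ, u n * w n := by rw [e1]
    _ = ∑' n : ℤ, (u n * w (n-1) - u n * w n) := (h3.tsum_sub h2).symm
    _ = ∑' n : ℤ, u n * (w (n-1) - w n) := by apply tsum_congr; intro n; ring

lemma bootstrap {S K E : ℝ} (hS : 0 ≤ S) (hE : 0 < E) (hK : 0 ≤ K)
    (h : S ≤ K * S ^ (1 - E)) : S ^ E ≤ K := by
  rcases eq_or_lt_of_le hS with hS0 | hS0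
  · rw [← hS0, Real.zero_rpow hE.ne']
    exact hK
  · have h2 := mul_le_mul_of_nonneg_right h (Real.rpow_nonneg hS0.le (E - 1))
    calc S ^ E = S * S ^ (E - 1) := by
          nth_rewrite 2 [← Real.rpow_one S]
          rw [← Real.rpow_add hS0]
          congr 1; ring
      _ ≤ K * S ^ (1 - E) * S ^ (E - 1) := h2
      _ = K * (S ^ (1 - E) * S ^ (E - 1)) := by ring
      _ = K := by
          rw [← Real.rpow_add hS0]
          norm_num

lemma holder2 {kR : ℝ} (hk : 1 < kR) (J : Finset ℤ) (y h : ℤ → ℝ)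
    (hy : ∀ n, 0 ≤ y n) (hh : ∀ n, 0 ≤ h n) :
    ∑ n ∈ J, y n * h n ^ (2*kR - 2) ≤
      (∑ n ∈ J, y n ^ kR) ^ (1/kR) * (∑ n ∈ J, h n ^ (2*kR)) ^ (1 - 1/kR) := by
  have hk0 : (0:ℝ) < kR := by linarith
  have hne1 : kR ≠ 0 := ne_of_gt hk0
  have hne2 : kR - 1 ≠ 0 := by intro hcon; rw [sub_eq_zero] at hcon; exact absurd hcon.symm (ne_of_lt hk)
  have hconj : Real.HolderConjugate kR (kR/(kR-1)) := Real.holderConjugate_iff.2 ⟨hk, by field_simp; ring⟩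
  have H := Real.inner_le_Lp_mul_Lq_of_nonneg J hconj (f := y)
    (g := fun n => h n ^ (2*kR - 2)) (fun i _ => hy i)
    (fun i _ => Real.rpow_nonneg (hh i) _)
  calc ∑ n ∈ J, y n * h n ^ (2*kR - 2)
      ≤ (∑ n ∈ J, y n ^ kR) ^ (1/kR) *
        (∑ n ∈ J, (h n ^ (2*kR - 2)) ^ (kR/(kR-1))) ^ (1/(kR/(kR-1))) := H
    _ = (∑ n ∈ J, y n ^ kR) ^ (1/kR) * (∑ n ∈ J, h n ^ (2*kR)) ^ (1 - 1/kR) := by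
        congr 2
        · apply Finset.sum_congr rfl
          intro n _
          rw [← Real.rpow_mul (hh n)]
          congr 1
          field_simp
        · field_simp

lemma holder3 {kR pR : ℝ} (hp1 : 1 < pR) (hpk : pR < kR) (J : Finset ℤ) (x y h : ℤ → ℝ)
    (hx : ∀ n, 0 ≤ x n) (hy : ∀ n, 0 ≤ y n) (hh : ∀ n, 0 ≤ h n) :
    ∑ n ∈ J, x n * (y n * h n ^ (2*kR/pR - 2)) ≤
      (∑ n ∈ J, x n ^ (2*kR/(pR-1))) ^ ((pR-1)/(2*kR)) *
        ((∑ n ∈ J, y n ^ (2*kR/(pR+1))) ^ ((pR+1)/(2*kR)) *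
          (∑ n ∈ J, h n ^ (2*kR/pR)) ^ (1 - pR/kR)) := by
  have hp0 : (0:ℝ) < pR := by linarith
  have hk0 : (0:ℝ) < kR := by linarith
  have h2k : (0:ℝ) < 2*kR := by linarith
  have hne1 : pR - 1 ≠ 0 := ne_of_gt (by linarith)
  have hne2 : 2*kR - pR + 1 ≠ 0 := ne_of_gt (by linarith)
  have hne3 : kR ≠ 0 := ne_of_gt hk0
  have hne4 : pR ≠ 0 := ne_of_gt hp0
  have hne5 : 2*kR - 2*pR ≠ 0 := ne_of_gt (by linarith)
  have hne6 : pR + 1 ≠ 0 := ne_of_gt (by linarith)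
  have hs'0 : (0:ℝ) < 2*kR/(2*kR-pR+1) := by apply div_pos h2k; linarith
  have hc1 : Real.HolderConjugate (2*kR/(pR-1)) (2*kR/(2*kR-pR+1)) := by
    refine Real.holderConjugate_iff.2 ⟨?_, ?_⟩
    · rw [lt_div_iff₀ (by linarith : (0:ℝ) < pR - 1)]; linarith
    · field_simp
      try ring
  have hc2 : Real.HolderConjugate ((2*kR-pR+1)/(pR+1)) ((2*kR-pR+1)/(2*kR-2*pR)) := by
    refine Real.holderConjugate_iff.2 ⟨?_, ?_⟩
    · rw [lt_div_iff₀ (by linarith : (0:ℝ) < pR + 1)]; linarith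
    · field_simp
      try ring
  have H1 := Real.inner_le_Lp_mul_Lq_of_nonneg J hc1 (f := x)
    (g := fun n => y n * h n ^ (2*kR/pR - 2)) (fun i _ => hx i)
    (fun i _ => mul_nonneg (hy i) (Real.rpow_nonneg (hh i) _))
  have H2 := Real.inner_le_Lp_mul_Lq_of_nonneg J hc2
    (f := fun n => y n ^ (2*kR/(2*kR-pR+1))) (g := fun n => h n ^ ((2*kR/pR - 2) * (2*kR/(2*kR-pR+1))))
    (fun i _ => Real.rpow_nonneg (hy i) _) (fun i _ => Real.rpow_nonneg (hh i) _)
  have e1 : ∀ n : ℤ, (y n * h n ^ (2*kR/pR - 2)) ^ (2*kR/(2*kR-pR+1)) =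
      y n ^ (2*kR/(2*kR-pR+1)) * h n ^ ((2*kR/pR - 2) * (2*kR/(2*kR-pR+1))) := by
    intro n
    rw [Real.mul_rpow (hy n) (Real.rpow_nonneg (hh n) _), ← Real.rpow_mul (hh n)]
  have e2 : ∀ n : ℤ, (y n ^ (2*kR/(2*kR-pR+1))) ^ ((2*kR-pR+1)/(pR+1)) = y n ^ (2*kR/(pR+1)) := by
    intro n
    rw [← Real.rpow_mul (hy n)]
    congr 1
    field_simp
  have e3 : ∀ n : ℤ, (h n ^ ((2*kR/pR - 2) * (2*kR/(2*kR-pR+1)))) ^ ((2*kR-pR+1)/(2*kR-2*pR)) =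
      h n ^ (2*kR/pR) := by
    intro n
    rw [← Real.rpow_mul (hh n)]
    congr 1
    have hkp : kR - pR ≠ 0 := sub_ne_zero.2 (ne_of_gt hpk)
    field_simp
  have hYnn : (0:ℝ) ≤ ∑ n ∈ J, (y n * h n ^ (2*kR/pR - 2)) ^ (2*kR/(2*kR-pR+1)) :=
    Finset.sum_nonneg fun n _ => Real.rpow_nonneg
      (mul_nonneg (hy n) (Real.rpow_nonneg (hh n) _)) _
  have hynn : (0:ℝ) ≤ ∑ n ∈ J, y n ^ (2*kR/(pR+1)) :=
    Finset.sum_nonneg fun n _ => Real.rpow_nonneg (hy n) _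
  have hhnn : (0:ℝ) ≤ ∑ n ∈ J, h n ^ (2*kR/pR) :=
    Finset.sum_nonneg fun n _ => Real.rpow_nonneg (hh n) _
  have step2 : (∑ n ∈ J, (y n * h n ^ (2*kR/pR - 2)) ^ (2*kR/(2*kR-pR+1))) ^ (1/(2*kR/(2*kR-pR+1))) ≤
      (∑ n ∈ J, y n ^ (2*kR/(pR+1))) ^ ((pR+1)/(2*kR)) *
        (∑ n ∈ J, h n ^ (2*kR/pR)) ^ (1 - pR/kR) := by
    have hle : ∑ n ∈ J, (y n * h n ^ (2*kR/pR - 2)) ^ (2*kR/(2*kR-pR+1)) ≤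
        (∑ n ∈ J, y n ^ (2*kR/(pR+1))) ^ (1/((2*kR-pR+1)/(pR+1))) *
          (∑ n ∈ J, h n ^ (2*kR/pR)) ^ (1/((2*kR-pR+1)/(2*kR-2*pR))) := by
      calc ∑ n ∈ J, (y n * h n ^ (2*kR/pR - 2)) ^ (2*kR/(2*kR-pR+1))
          = ∑ n ∈ J, y n ^ (2*kR/(2*kR-pR+1)) * h n ^ ((2*kR/pR - 2) * (2*kR/(2*kR-pR+1))) :=
            Finset.sum_congr rfl fun n _ => e1 n
        _ ≤ _ := H2
        _ = _ := by
            rw [Finset.sum_congr rfl fun n _ => e2 n, Finset.sum_congr rfl fun n _ => e3 n]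
    calc (∑ n ∈ J, (y n * h n ^ (2*kR/pR - 2)) ^ (2*kR/(2*kR-pR+1))) ^ (1/(2*kR/(2*kR-pR+1)))
        ≤ ((∑ n ∈ J, y n ^ (2*kR/(pR+1))) ^ (1/((2*kR-pR+1)/(pR+1))) *
          (∑ n ∈ J, h n ^ (2*kR/pR)) ^ (1/((2*kR-pR+1)/(2*kR-2*pR)))) ^ (1/(2*kR/(2*kR-pR+1))) :=
          Real.rpow_le_rpow hYnn hle (by positivity)
      _ = _ := by
          rw [Real.mul_rpow (Real.rpow_nonneg hynn _) (Real.rpow_nonneg hhnn _),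
            ← Real.rpow_mul hynn, ← Real.rpow_mul hhnn]
          congr 2
          · field_simp
          · field_simp
  calc ∑ n ∈ J, x n * (y n * h n ^ (2*kR/pR - 2))
      ≤ (∑ n ∈ J, x n ^ (2*kR/(pR-1))) ^ (1/(2*kR/(pR-1))) *
        (∑ n ∈ J, (y n * h n ^ (2*kR/pR - 2)) ^ (2*kR/(2*kR-pR+1))) ^ (1/(2*kR/(2*kR-pR+1))) := H1
    _ ≤ (∑ n ∈ J, x n ^ (2*kR/(pR-1))) ^ (1/(2*kR/(pR-1))) *
        ((∑ n ∈ J, y n ^ (2*kR/(pR+1))) ^ ((pR+1)/(2*kR)) *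
          (∑ n ∈ J, h n ^ (2*kR/pR)) ^ (1 - pR/kR)) :=
        mul_le_mul_of_nonneg_left step2
          (Real.rpow_nonneg (Finset.sum_nonneg fun n _ => Real.rpow_nonneg (hx n) _) _)
    _ = _ := by
        congr 2
        field_simp
set_option maxHeartbeats 1000000 in
theorem main_ineq (k p : ℕ) (hk : 1 ≤ k) (hp : 1 ≤ p) (hpk : p ≤ k) (α : ℤ → ℂ)
    (hfin : {n : ℤ | α n ≠ 0}.Finite) :
    (∑' n : ℤ, ‖α (n + 1) - α n‖ ^ (2 * (k:ℝ) / (p:ℝ))) ^ ((p : ℝ) / (k:ℝ)) ≤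
      (2 * (k:ℝ) / (p:ℝ) - 1) *
        (∑' n : ℤ, ‖α (n + 2) - 2 * α (n + 1) + α n‖ ^ (2 * (k:ℝ) / ((p:ℝ) + 1))) ^
          (((p:ℝ) + 1) / (2 * (k:ℝ))) *
        (if p = 1 then ⨆ n : ℤ, ‖α n‖
          else (∑' n : ℤ, ‖α n‖ ^ (2 * (k:ℝ) / ((p : ℝ) - 1))) ^ (((p : ℝ) - 1) / (2 * (k:ℝ)))) := by
  classical
  have hp0 : (0:ℝ) < (p:ℝ) := by exact_mod_cast hp
  have hk1 : (1:ℝ) ≤ (k:ℝ) := by exact_mod_cast hk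
  have hk0 : (0:ℝ) < (k:ℝ) := by linarith
  have hpkR : (p:ℝ) ≤ (k:ℝ) := by exact_mod_cast hpk
  have hQ2 : 2 ≤ 2 * (k:ℝ) / (p:ℝ) := by rw [le_div_iff₀ hp0]; linarith
  have hQ0 : (0:ℝ) < 2 * (k:ℝ) / (p:ℝ) := by linarith
  have hr0 : (0:ℝ) < 2 * (k:ℝ) / ((p:ℝ) + 1) := by apply div_pos <;> linarith
  have hE0 : (0:ℝ) < (p:ℝ) / (k:ℝ) := div_pos hp0 hk0
  -- support bound
  obtain ⟨N, hN⟩ : ∃ N : ℕ, ∀ n : ℤ, α n ≠ 0 → -(N:ℤ) ≤ n ∧ n ≤ (N:ℤ) := by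
    refine ⟨hfin.toFinset.sup Int.natAbs, fun n hn => ?_⟩
    have hmem : n ∈ hfin.toFinset := by simpa using hn
    have := Finset.le_sup (f := Int.natAbs) hmem
    omega
  have hα0 : ∀ n : ℤ, (n < -(N:ℤ) ∨ (N:ℤ) < n) → α n = 0 := by
    intro n hn
    by_contra hcon
    rcases hN n hcon with ⟨h1, h2⟩
    omega
  set J : Finset ℤ := Finset.Icc (-(N:ℤ) - 3) ((N:ℤ) + 3) with hJdef
  have hJn : ∀ n : ℤ, n ∉ J → (n < -(N:ℤ) - 3 ∨ (N:ℤ) + 3 < n) := by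
    intro n hn
    rw [hJdef, Finset.mem_Icc] at hn
    omega
  set b : ℤ → ℂ := fun n => α (n + 1) - α n with hbdef
  set d : ℤ → ℂ := fun n => b n - b (n - 1) with hddef
  set c : ℤ → ℂ := fun n => phiQ (2 * (k:ℝ) / (p:ℝ)) (b n) with hcdef
  have hαJ : ∀ n ∉ J, α n = 0 := fun n hn => hα0 n (by have := hJn n hn; omega)
  have hbJ : ∀ n ∉ J, b n = 0 := by
    intro n hn
    have h := hJn n hn
    rw [hbdef]
    simp only
    rw [hα0 (n+1) (by omega), hα0 n (by omega), sub_zero]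
  have hdJ : ∀ n ∉ J, d n = 0 := by
    intro n hn
    have h := hJn n hn
    rw [hddef, hbdef]
    simp only
    rw [hα0 (n+1) (by omega), hα0 n (by omega), hα0 (n-1+1) (by omega), hα0 (n-1) (by omega)]
    ring
  -- summability
  have sum_bQ : Summable (fun n : ℤ => ‖b n‖ ^ (2 * (k:ℝ) / (p:ℝ))) :=
    summable_of_ne_finset_zero (s := J)
      (fun n hn => by rw [hbJ n hn, norm_zero, Real.zero_rpow hQ0.ne'])
  have sum_dr : Summable (fun n : ℤ => ‖d n‖ ^ (2 * (k:ℝ) / ((p:ℝ) + 1))) :=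
    summable_of_ne_finset_zero (s := J)
      (fun n hn => by rw [hdJ n hn, norm_zero, Real.zero_rpow hr0.ne'])
  have s1 : Summable (fun n : ℤ => α (n+1) * c n) :=
    summable_of_ne_finset_zero (s := J)
      (fun n hn => by rw [hα0 (n+1) (by have := hJn n hn; omega), zero_mul])
  have s2 : Summable (fun n : ℤ => α n * c n) :=
    summable_of_ne_finset_zero (s := J) (fun n hn => by rw [hαJ n hn, zero_mul])
  have s3 : Summable (fun n : ℤ => α n * c (n-1)) :=
    summable_of_ne_finset_zero (s := J) (fun n hn => by rw [hαJ n hn, zero_mul])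
  have s5 : Summable (fun n : ℤ => ‖α n * (c (n-1) - c n)‖) :=
    summable_of_ne_finset_zero (s := J)
      (fun n hn => by rw [hαJ n hn, zero_mul, norm_zero])
  set S : ℝ := ∑' n : ℤ, ‖b n‖ ^ (2 * (k:ℝ) / (p:ℝ)) with hSdef
  have hS0 : 0 ≤ S :=
    tsum_nonneg (fun n => Real.rpow_nonneg (norm_nonneg _) _)
  -- Abel summation
  have habel : ((S:ℝ) : ℂ) = ∑' n : ℤ, α n * (c (n-1) - c n) := by
    calc ((S:ℝ) : ℂ) = ∑' n : ℤ, ((‖b n‖ ^ (2 * (k:ℝ) / (p:ℝ)) : ℝ) : ℂ) := by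
          rw [hSdef]
          exact Complex.ofRealCLM.map_tsum sum_bQ
      _ = ∑' n : ℤ, b n * c n := tsum_congr fun n => (mul_phiQ hQ2 (b n)).symm
      _ = ∑' n : ℤ, α n * (c (n-1) - c n) := abel_sum α c s1 s2 s3
  have hstep2 : S ≤ ∑ n ∈ J, ‖α n‖ * ‖c (n-1) - c n‖ := by
    calc S = ‖((S:ℝ):ℂ)‖ := by rw [Complex.norm_real, Real.norm_eq_abs, abs_of_nonneg hS0]
      _ = ‖∑' n : ℤ, α n * (c (n-1) - c n)‖ := by rw [habel]
      _ ≤ ∑' n : ℤ, ‖α n * (c (n-1) - c n)‖ := norm_tsum_le_tsum_norm s5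
      _ = ∑ n ∈ J, ‖α n * (c (n-1) - c n)‖ :=
          tsum_eq_sum (fun n hn => by rw [hαJ n hn, zero_mul, norm_zero])
      _ = ∑ n ∈ J, ‖α n‖ * ‖c (n-1) - c n‖ := Finset.sum_congr rfl fun n _ => norm_mul _ _
  -- second difference sum identity
  have hdsum : ∑' n : ℤ, ‖α (n + 2) - 2 * α (n + 1) + α n‖ ^ (2 * (k:ℝ) / ((p:ℝ) + 1)) =
      ∑ n ∈ J, ‖d n‖ ^ (2 * (k:ℝ) / ((p:ℝ) + 1)) := by
    have e : ∑' n : ℤ, ‖d n‖ ^ (2 * (k:ℝ) / ((p:ℝ) + 1)) =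
        ∑' m : ℤ, ‖α (m + 2) - 2 * α (m + 1) + α m‖ ^ (2 * (k:ℝ) / ((p:ℝ) + 1)) := by
      rw [← (Equiv.subRight (1:ℤ)).tsum_eq
        (f := fun m : ℤ => ‖α (m + 2) - 2 * α (m + 1) + α m‖ ^ (2 * (k:ℝ) / ((p:ℝ) + 1)))]
      apply tsum_congr
      intro n
      have hdn : d n = α ((n - 1) + 2) - 2 * α ((n - 1) + 1) + α (n - 1) := by
        rw [hddef, hbdef]
        simp only
        rw [show n - 1 + 2 = n + 1 by ring, show n - 1 + 1 = n by ring]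
        ring
      rw [hdn]
      rfl
    rw [← e]
    exact tsum_eq_sum (fun n hn => by rw [hdJ n hn, norm_zero, Real.zero_rpow hr0.ne'])
  -- abbreviations matching the goal
  set A : ℝ := (if p = 1 then ⨆ n : ℤ, ‖α n‖
      else (∑' n : ℤ, ‖α n‖ ^ (2 * (k:ℝ) / ((p : ℝ) - 1))) ^ (((p : ℝ) - 1) / (2 * (k:ℝ))))
    with hAdef
  set Bg : ℝ := (∑' n : ℤ, ‖α (n + 2) - 2 * α (n + 1) + α n‖ ^ (2 * (k:ℝ) / ((p:ℝ) + 1))) ^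
      (((p:ℝ) + 1) / (2 * (k:ℝ))) with hBdef
  have hBg0 : 0 ≤ Bg :=
    Real.rpow_nonneg (tsum_nonneg fun n => Real.rpow_nonneg (norm_nonneg _) _) _
  have hA0 : 0 ≤ A := by
    rw [hAdef]
    split_ifs
    · exact Real.iSup_nonneg fun n => norm_nonneg _
    · exact Real.rpow_nonneg (tsum_nonneg fun n => Real.rpow_nonneg (norm_nonneg _) _) _
  have hMbound : p = 1 → ∀ n : ℤ, ‖α n‖ ≤ A := by
    intro hp1 n
    rw [hAdef, if_pos hp1]
    apply le_ciSup _ n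
    have hsub : Set.range (fun n : ℤ => ‖α n‖) ⊆
        ((fun n : ℤ => ‖α n‖) '' {n : ℤ | α n ≠ 0}) ∪ {0} := by
      rintro x ⟨n, rfl⟩
      by_cases hzero : α n = 0
      · right; simp [hzero]
      · left; exact ⟨n, hzero, rfl⟩
    exact (((hfin.image _).union (Set.finite_singleton 0)).subset hsub).bddAbove
  have hBbase : 0 ≤ ∑ n ∈ J, ‖d n‖ ^ (2 * (k:ℝ) / ((p:ℝ) + 1)) :=
    Finset.sum_nonneg fun n _ => Real.rpow_nonneg (norm_nonneg _) _
  -- reduce goal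
  show S ^ ((p:ℝ)/(k:ℝ)) ≤ (2 * (k:ℝ) / (p:ℝ) - 1) * Bg * A
  rw [mul_assoc]
  apply bootstrap hS0 hE0 (mul_nonneg (by linarith) (mul_nonneg hBg0 hA0))
  -- main estimate : S ≤ (Q - 1) * (Bg * A) * S ^ (1 - p/k)
  rcases lt_or_eq_of_le hpk with hlt | heq
  · -- p < k
    have hpltR : (p:ℝ) < (k:ℝ) := by exact_mod_cast hlt
    have hQgt2 : 2 < 2 * (k:ℝ)/(p:ℝ) := by rw [lt_div_iff₀ hp0]; linarith
    have hE1 : (0:ℝ) ≤ 1 - (p:ℝ)/(k:ℝ) := by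
      rw [sub_nonneg, div_le_one hk0]; linarith
    have hptw : ∀ n : ℤ, ‖c (n-1) - c n‖ ≤ (2 * (k:ℝ)/(p:ℝ) - 1) * ‖d n‖ *
        ∫ t in (0:ℝ)..1, ((1-t) * ‖b (n-1)‖ + t * ‖b n‖) ^ (2 * (k:ℝ)/(p:ℝ) - 2) := by
      intro n
      rw [norm_sub_rev]
      exact keyC hQgt2 (b n) (b (n-1))
    have hcontH : ∀ n : ℤ, Continuous fun t : ℝ =>
        ((1-t) * ‖b (n-1)‖ + t * ‖b n‖) ^ (2 * (k:ℝ)/(p:ℝ) - 2) := by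
      intro n
      apply Continuous.rpow_const
        (((continuous_const.sub continuous_id).mul continuous_const).add
          (continuous_id.mul continuous_const))
      exact fun _ => Or.inr (by linarith)
    have hFint : ∀ n : ℤ, IntervalIntegrable
        (fun t : ℝ => ‖α n‖ * ‖d n‖ *
          ((1-t) * ‖b (n-1)‖ + t * ‖b n‖) ^ (2 * (k:ℝ)/(p:ℝ) - 2))
        MeasureTheory.volume 0 1 :=
      fun n => ((continuous_const.mul (hcontH n)).intervalIntegrable 0 1)
    have hSle3 : S ≤ (2 * (k:ℝ)/(p:ℝ) - 1) * ∫ t in (0:ℝ)..1, ∑ n ∈ J,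
        ‖α n‖ * ‖d n‖ * ((1-t) * ‖b (n-1)‖ + t * ‖b n‖) ^ (2 * (k:ℝ)/(p:ℝ) - 2) := by
      calc S ≤ ∑ n ∈ J, ‖α n‖ * ‖c (n-1) - c n‖ := hstep2
        _ ≤ ∑ n ∈ J, ‖α n‖ * ((2 * (k:ℝ)/(p:ℝ) - 1) * ‖d n‖ *
            ∫ t in (0:ℝ)..1, ((1-t) * ‖b (n-1)‖ + t * ‖b n‖) ^ (2 * (k:ℝ)/(p:ℝ) - 2)) :=
            Finset.sum_le_sum fun n _ => mul_le_mul_of_nonneg_left (hptw n) (norm_nonneg _)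
        _ = (2 * (k:ℝ)/(p:ℝ) - 1) * ∑ n ∈ J, ∫ t in (0:ℝ)..1,
            ‖α n‖ * ‖d n‖ * ((1-t) * ‖b (n-1)‖ + t * ‖b n‖) ^ (2 * (k:ℝ)/(p:ℝ) - 2) := by
            rw [Finset.mul_sum]
            apply Finset.sum_congr rfl
            intro n _
            rw [intervalIntegral.integral_const_mul]
            ring
        _ = (2 * (k:ℝ)/(p:ℝ) - 1) * ∫ t in (0:ℝ)..1, ∑ n ∈ J,
            ‖α n‖ * ‖d n‖ * ((1-t) * ‖b (n-1)‖ + t * ‖b n‖) ^ (2 * (k:ℝ)/(p:ℝ) - 2) := by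
            rw [← intervalIntegral.integral_finset_sum (fun n _ => hFint n)]
    have hHQle : ∀ t ∈ Set.Icc (0:ℝ) 1,
        ∑ n ∈ J, ((1-t) * ‖b (n-1)‖ + t * ‖b n‖) ^ (2 * (k:ℝ)/(p:ℝ)) ≤ S := by
      intro t ht
      have hcv : ∀ n : ℤ, ((1-t) * ‖b (n-1)‖ + t * ‖b n‖) ^ (2 * (k:ℝ)/(p:ℝ)) ≤
          (1-t) * ‖b (n-1)‖ ^ (2 * (k:ℝ)/(p:ℝ)) + t * ‖b n‖ ^ (2 * (k:ℝ)/(p:ℝ)) := by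
        intro n
        have hcx := (convexOn_rpow (by linarith : (1:ℝ) ≤ 2 * (k:ℝ)/(p:ℝ))).2
          (Set.mem_Ici.2 (norm_nonneg (b (n-1)))) (Set.mem_Ici.2 (norm_nonneg (b n)))
          (by linarith [ht.2] : (0:ℝ) ≤ 1 - t) ht.1 (by ring)
        simpa [smul_eq_mul] using hcx
      have hshift : ∑ n ∈ J, ‖b (n-1)‖ ^ (2 * (k:ℝ)/(p:ℝ)) ≤ S := by
        have hmap : ∑ m ∈ J.map (Equiv.subRight (1:ℤ)).toEmbedding,
            ‖b m‖ ^ (2 * (k:ℝ)/(p:ℝ)) = ∑ n ∈ J, ‖b (n-1)‖ ^ (2 * (k:ℝ)/(p:ℝ)) :=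
          Finset.sum_map J _ _
        rw [← hmap, hSdef]
        exact sum_bQ.sum_le_tsum _ (fun n _ => Real.rpow_nonneg (norm_nonneg _) _)
      have hid : ∑ n ∈ J, ‖b n‖ ^ (2 * (k:ℝ)/(p:ℝ)) ≤ S := by
        rw [hSdef]
        exact sum_bQ.sum_le_tsum _ (fun n _ => Real.rpow_nonneg (norm_nonneg _) _)
      calc ∑ n ∈ J, ((1-t) * ‖b (n-1)‖ + t * ‖b n‖) ^ (2 * (k:ℝ)/(p:ℝ))
          ≤ ∑ n ∈ J, ((1-t) * ‖b (n-1)‖ ^ (2 * (k:ℝ)/(p:ℝ)) +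
              t * ‖b n‖ ^ (2 * (k:ℝ)/(p:ℝ))) := Finset.sum_le_sum fun n _ => hcv n
        _ = (1-t) * (∑ n ∈ J, ‖b (n-1)‖ ^ (2 * (k:ℝ)/(p:ℝ))) +
            t * (∑ n ∈ J, ‖b n‖ ^ (2 * (k:ℝ)/(p:ℝ))) := by
            rw [Finset.sum_add_distrib, Finset.mul_sum, Finset.mul_sum]
        _ ≤ (1-t) * S + t * S :=
            add_le_add (mul_le_mul_of_nonneg_left hshift (by linarith [ht.2]))
              (mul_le_mul_of_nonneg_left hid ht.1)
        _ = S := by ring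
    have hpert : ∀ t ∈ Set.Icc (0:ℝ) 1,
        ∑ n ∈ J, ‖α n‖ * ‖d n‖ *
            ((1-t) * ‖b (n-1)‖ + t * ‖b n‖) ^ (2 * (k:ℝ)/(p:ℝ) - 2) ≤
          Bg * A * S ^ (1 - (p:ℝ)/(k:ℝ)) := by
      intro t ht
      have hHnn : ∀ n : ℤ, 0 ≤ (1-t) * ‖b (n-1)‖ + t * ‖b n‖ := by
        intro n
        have h1 := norm_nonneg (b (n-1))
        have h2 := norm_nonneg (b n)
        have h3 := ht.1
        have h4 := ht.2
        nlinarith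
      have hsumHnn : 0 ≤ ∑ n ∈ J, ((1-t) * ‖b (n-1)‖ + t * ‖b n‖) ^ (2 * (k:ℝ)/(p:ℝ)) :=
        Finset.sum_nonneg fun n _ => Real.rpow_nonneg (hHnn n) _
      have hsum_exp : (∑ n ∈ J, ((1-t) * ‖b (n-1)‖ + t * ‖b n‖) ^ (2 * (k:ℝ)/(p:ℝ))) ^
            (1 - (p:ℝ)/(k:ℝ)) ≤ S ^ (1 - (p:ℝ)/(k:ℝ)) :=
        Real.rpow_le_rpow hsumHnn (hHQle t ht) hE1
      by_cases hp1 : p = 1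
      · -- p = 1 : sup bound then pair Hoelder
        have hp1R : (p:ℝ) = 1 := by rw [hp1]; norm_num
        have hk2R : 1 < (k:ℝ) := by linarith
        have e1 : 2 * (k:ℝ)/(p:ℝ) - 2 = 2*(k:ℝ) - 2 := by rw [hp1R, div_one]
        have e2 : 2 * (k:ℝ)/(p:ℝ) = 2*(k:ℝ) := by rw [hp1R, div_one]
        have e3 : 2 * (k:ℝ)/((p:ℝ)+1) = (k:ℝ) := by rw [hp1R]; norm_num
        have e4 : ((p:ℝ)+1)/(2 * (k:ℝ)) = 1/(k:ℝ) := by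
          rw [hp1R]
          rw [show (1:ℝ) + 1 = 2 by norm_num, div_eq_div_iff (by linarith) (by linarith)]
          ring
        have e5 : 1 - (p:ℝ)/(k:ℝ) = 1 - 1/(k:ℝ) := by rw [hp1R]
        have hBg_eq : Bg = (∑ n ∈ J, ‖d n‖ ^ (k:ℝ)) ^ (1/(k:ℝ)) := by
          rw [hBdef, hdsum, e3, e4]
        have hH2 := holder2 hk2R J (fun n => ‖d n‖)
          (fun n => (1-t) * ‖b (n-1)‖ + t * ‖b n‖) (fun n => norm_nonneg _) hHnn
        calc ∑ n ∈ J, ‖α n‖ * ‖d n‖ *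
              ((1-t) * ‖b (n-1)‖ + t * ‖b n‖) ^ (2 * (k:ℝ)/(p:ℝ) - 2)
            ≤ ∑ n ∈ J, A * (‖d n‖ *
              ((1-t) * ‖b (n-1)‖ + t * ‖b n‖) ^ (2 * (k:ℝ)/(p:ℝ) - 2)) := by
              apply Finset.sum_le_sum
              intro n _
              rw [mul_assoc]
              exact mul_le_mul_of_nonneg_right (hMbound hp1 n)
                (mul_nonneg (norm_nonneg _) (Real.rpow_nonneg (hHnn n) _))
          _ = A * ∑ n ∈ J, ‖d n‖ *
              ((1-t) * ‖b (n-1)‖ + t * ‖b n‖) ^ (2*(k:ℝ) - 2) := by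
              rw [Finset.mul_sum, e1]
          _ ≤ A * ((∑ n ∈ J, ‖d n‖ ^ (k:ℝ)) ^ (1/(k:ℝ)) *
              (∑ n ∈ J, ((1-t) * ‖b (n-1)‖ + t * ‖b n‖) ^ (2*(k:ℝ))) ^ (1 - 1/(k:ℝ))) :=
              mul_le_mul_of_nonneg_left hH2 hA0
          _ ≤ A * ((∑ n ∈ J, ‖d n‖ ^ (k:ℝ)) ^ (1/(k:ℝ)) * S ^ (1 - 1/(k:ℝ))) := by
              apply mul_le_mul_of_nonneg_left _ hA0
              apply mul_le_mul_of_nonneg_left _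
                (Real.rpow_nonneg (Finset.sum_nonneg fun n _ => Real.rpow_nonneg (norm_nonneg _) _) _)
              rw [← e2, ← e5]
              exact hsum_exp
          _ = Bg * A * S ^ (1 - (p:ℝ)/(k:ℝ)) := by
              rw [hBg_eq, e5]
              ring
      · -- 2 ≤ p : triple Hoelder
        have hp2R : 1 < (p:ℝ) := by
          have h2 : 2 ≤ p := by omega
          have : (2:ℝ) ≤ (p:ℝ) := by exact_mod_cast h2
          linarith
        have hsE0 : (0:ℝ) < 2 * (k:ℝ)/((p:ℝ)-1) := div_pos (by linarith) (by linarith)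
        have hαsum : ∑' n : ℤ, ‖α n‖ ^ (2 * (k:ℝ)/((p:ℝ)-1)) =
            ∑ n ∈ J, ‖α n‖ ^ (2 * (k:ℝ)/((p:ℝ)-1)) :=
          tsum_eq_sum (fun n hn => by rw [hαJ n hn, norm_zero, Real.zero_rpow hsE0.ne'])
        have hAeq : A = (∑ n ∈ J, ‖α n‖ ^ (2 * (k:ℝ)/((p:ℝ)-1))) ^ (((p:ℝ)-1)/(2 * (k:ℝ))) := by
          rw [hAdef, if_neg hp1, hαsum]
        have hBgeq : Bg = (∑ n ∈ J, ‖d n‖ ^ (2 * (k:ℝ)/((p:ℝ)+1))) ^ (((p:ℝ)+1)/(2 * (k:ℝ))) := by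
          rw [hBdef, hdsum]
        have hH3 := holder3 hp2R hpltR J (fun n => ‖α n‖) (fun n => ‖d n‖)
          (fun n => (1-t) * ‖b (n-1)‖ + t * ‖b n‖)
          (fun n => norm_nonneg _) (fun n => norm_nonneg _) hHnn
        calc ∑ n ∈ J, ‖α n‖ * ‖d n‖ *
              ((1-t) * ‖b (n-1)‖ + t * ‖b n‖) ^ (2 * (k:ℝ)/(p:ℝ) - 2)
            = ∑ n ∈ J, ‖α n‖ * (‖d n‖ *
              ((1-t) * ‖b (n-1)‖ + t * ‖b n‖) ^ (2 * (k:ℝ)/(p:ℝ) - 2)) :=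
              Finset.sum_congr rfl fun n _ => mul_assoc _ _ _
          _ ≤ (∑ n ∈ J, ‖α n‖ ^ (2 * (k:ℝ)/((p:ℝ)-1))) ^ (((p:ℝ)-1)/(2 * (k:ℝ))) *
              ((∑ n ∈ J, ‖d n‖ ^ (2 * (k:ℝ)/((p:ℝ)+1))) ^ (((p:ℝ)+1)/(2 * (k:ℝ))) *
                (∑ n ∈ J, ((1-t) * ‖b (n-1)‖ + t * ‖b n‖) ^ (2 * (k:ℝ)/(p:ℝ))) ^
                  (1 - (p:ℝ)/(k:ℝ))) := hH3
          _ ≤ (∑ n ∈ J, ‖α n‖ ^ (2 * (k:ℝ)/((p:ℝ)-1))) ^ (((p:ℝ)-1)/(2 * (k:ℝ))) *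
              ((∑ n ∈ J, ‖d n‖ ^ (2 * (k:ℝ)/((p:ℝ)+1))) ^ (((p:ℝ)+1)/(2 * (k:ℝ))) *
                S ^ (1 - (p:ℝ)/(k:ℝ))) := by
              apply mul_le_mul_of_nonneg_left _
                (Real.rpow_nonneg (Finset.sum_nonneg fun n _ =>
                  Real.rpow_nonneg (norm_nonneg _) _) _)
              exact mul_le_mul_of_nonneg_left hsum_exp
                (Real.rpow_nonneg (Finset.sum_nonneg fun n _ =>
                  Real.rpow_nonneg (norm_nonneg _) _) _)
          _ = Bg * A * S ^ (1 - (p:ℝ)/(k:ℝ)) := by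
              rw [hAeq, hBgeq]
              ring
    have hcontSum : Continuous fun t : ℝ => ∑ n ∈ J, ‖α n‖ * ‖d n‖ *
        ((1-t) * ‖b (n-1)‖ + t * ‖b n‖) ^ (2 * (k:ℝ)/(p:ℝ) - 2) :=
      continuous_finset_sum J (fun n _ => continuous_const.mul (hcontH n))
    calc S ≤ (2 * (k:ℝ)/(p:ℝ) - 1) * ∫ t in (0:ℝ)..1, ∑ n ∈ J,
          ‖α n‖ * ‖d n‖ * ((1-t) * ‖b (n-1)‖ + t * ‖b n‖) ^ (2 * (k:ℝ)/(p:ℝ) - 2) := hSle3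
      _ ≤ (2 * (k:ℝ)/(p:ℝ) - 1) * (Bg * A * S ^ (1 - (p:ℝ)/(k:ℝ))) := by
          apply mul_le_mul_of_nonneg_left _ (by linarith : (0:ℝ) ≤ 2 * (k:ℝ)/(p:ℝ) - 1)
          calc (∫ t in (0:ℝ)..1, ∑ n ∈ J, ‖α n‖ * ‖d n‖ *
                ((1-t) * ‖b (n-1)‖ + t * ‖b n‖) ^ (2 * (k:ℝ)/(p:ℝ) - 2))
              ≤ ∫ _t in (0:ℝ)..1, Bg * A * S ^ (1 - (p:ℝ)/(k:ℝ)) :=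
                intervalIntegral.integral_mono_on (by norm_num)
                  (hcontSum.intervalIntegrable 0 1) intervalIntegrable_const hpert
            _ = Bg * A * S ^ (1 - (p:ℝ)/(k:ℝ)) := by simp
      _ = (2 * (k:ℝ)/(p:ℝ) - 1) * (Bg * A) * S ^ (1 - (p:ℝ)/(k:ℝ)) := by ring
  · -- p = k
    have hpk' : (p:ℝ) = (k:ℝ) := by exact_mod_cast heq
    have hQeq : 2 * (k:ℝ) / (p:ℝ) = 2 := by rw [hpk']; field_simp
    have hE1 : 1 - (p:ℝ)/(k:ℝ) = 0 := by rw [hpk', div_self hk0.ne']; ring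
    rw [hE1, Real.rpow_zero, mul_one, hQeq]
    norm_num
    have hc2 : ∀ n : ℤ, c n = (starRingEnd ℂ) (b n) := by
      intro n
      rw [hcdef]
      simp only
      rw [hQeq, phiQ]
      norm_num
    have hcd : ∀ n : ℤ, ‖c (n-1) - c n‖ = ‖d n‖ := by
      intro n
      rw [hc2, hc2, ← map_sub, RCLike.norm_conj, hddef]
      simp only
      rw [norm_sub_rev]
    have hS2 : S ≤ ∑ n ∈ J, ‖α n‖ * ‖d n‖ := by
      refine hstep2.trans (le_of_eq (Finset.sum_congr rfl fun n _ => by rw [hcd]))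
    by_cases hp1 : p = 1
    · -- k = p = 1
      have hp1R : (p:ℝ) = 1 := by rw [hp1]; norm_num
      have hk1R : (k:ℝ) = 1 := by rw [← heq, hp1]; norm_num
      have hr1 : 2 * (k:ℝ)/((p:ℝ)+1) = 1 := by rw [hp1R, hk1R]; norm_num
      have he1 : ((p:ℝ) + 1)/(2 * (k:ℝ)) = 1 := by rw [hp1R, hk1R]; norm_num
      calc S ≤ ∑ n ∈ J, ‖α n‖ * ‖d n‖ := hS2
        _ ≤ ∑ n ∈ J, A * ‖d n‖ := Finset.sum_le_sum fun n _ =>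
            mul_le_mul_of_nonneg_right (hMbound hp1 n) (norm_nonneg _)
        _ = A * ∑ n ∈ J, ‖d n‖ := by rw [Finset.mul_sum]
        _ = A * ∑ n ∈ J, ‖d n‖ ^ (2 * (k:ℝ)/((p:ℝ)+1)) := by
            rw [hr1]
            simp [Real.rpow_one]
        _ = A * (∑' n : ℤ, ‖α (n + 2) - 2 * α (n + 1) + α n‖ ^ (2 * (k:ℝ) / ((p:ℝ) + 1))) := by
            rw [hdsum]
        _ = Bg * A := by
            rw [hBdef, he1, Real.rpow_one, mul_comm]
    · -- 2 ≤ p = k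
      have hp2R : 1 < (p:ℝ) := by
        have h2 : 2 ≤ p := by omega
        have : (2:ℝ) ≤ (p:ℝ) := by exact_mod_cast h2
        linarith
      have hsE0 : (0:ℝ) < 2 * (k:ℝ)/((p:ℝ)-1) := div_pos (by linarith) (by linarith)
      have hαsum : ∑' n : ℤ, ‖α n‖ ^ (2 * (k:ℝ)/((p:ℝ)-1)) =
          ∑ n ∈ J, ‖α n‖ ^ (2 * (k:ℝ)/((p:ℝ)-1)) :=
        tsum_eq_sum (fun n hn => by rw [hαJ n hn, norm_zero, Real.zero_rpow hsE0.ne'])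
      have hne1 : (p:ℝ) - 1 ≠ 0 := ne_of_gt (by linarith)
      have hne2 : (p:ℝ) + 1 ≠ 0 := ne_of_gt (by linarith)
      have hne3 : (k:ℝ) ≠ 0 := ne_of_gt hk0
      have hconj : Real.HolderConjugate (2 * (k:ℝ)/((p:ℝ)-1)) (2 * (k:ℝ)/((p:ℝ)+1)) := by
        refine Real.holderConjugate_iff.2 ⟨?_, ?_⟩
        · rw [lt_div_iff₀ (by linarith : (0:ℝ) < (p:ℝ) - 1)]; linarith
        · rw [← hpk']
          field_simp
          ring
      have H := Real.inner_le_Lp_mul_Lq_of_nonneg J hconj (f := fun n => ‖α n‖)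
        (g := fun n => ‖d n‖) (fun i _ => norm_nonneg _) (fun i _ => norm_nonneg _)
      calc S ≤ ∑ n ∈ J, ‖α n‖ * ‖d n‖ := hS2
        _ ≤ (∑ n ∈ J, ‖α n‖ ^ (2 * (k:ℝ)/((p:ℝ)-1))) ^ (1/(2 * (k:ℝ)/((p:ℝ)-1))) *
            (∑ n ∈ J, ‖d n‖ ^ (2 * (k:ℝ)/((p:ℝ)+1))) ^ (1/(2 * (k:ℝ)/((p:ℝ)+1))) := H
        _ = Bg * A := by
            rw [← hαsum, ← hdsum, one_div_div, one_div_div, hBdef, hAdef, if_neg hp1, mul_comm]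

open scoped BigOperators

theorem stmt3 (k p : ℕ) (hk : 1 ≤ k) (hp : 1 ≤ p) (hpk : p ≤ k) (α : ℤ → ℂ)
    (hfin : {n : ℤ | α n ≠ 0}.Finite) :
    (∑' n : ℤ, ‖α (n + 1) - α n‖ ^ ((2 * k : ℝ) / p)) ^ ((p : ℝ) / k) ≤
      ((2 * k - p : ℝ) / p) *
        (∑' n : ℤ, ‖α (n + 2) - 2 * α (n + 1) + α n‖ ^ ((2 * k : ℝ) / (p + 1))) ^
          ((p + 1 : ℝ) / (2 * k)) *
        (if p = 1 then ⨆ n : ℤ, ‖α n‖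
          else (∑' n : ℤ, ‖α n‖ ^ ((2 * k : ℝ) / ((p : ℝ) - 1))) ^ (((p : ℝ) - 1) / (2 * k))) := by
  have hp0 : (p:ℝ) ≠ 0 := by
    have : (0:ℝ) < (p:ℝ) := by exact_mod_cast hp
    exact ne_of_gt this
  have H := main_ineq k p hk hp hpk α hfin
  rw [show ((2 * (k:ℝ) - (p:ℝ)) / (p:ℝ)) = 2 * (k:ℝ) / (p:ℝ) - 1 by
    rw [sub_div, div_self hp0]]
  exact H
end

section
/- Let α = (α_n)_{n≥0} be a sequence of complex numbers. Then the following two sets of conditions are equivalent: (L₃): (S+1)(S−1)²α ∈ ℓ², (S−1)²α ∈ ℓ⁴, and α ∈ ℓ⁶; (L₄): (S+1)(S−1)²α ∈ ℓ², (S−1)α ∈ ℓ⁴, and α ∈ ℓ⁶. Moreover, if these conditions hold, then (S²−1)α ∈ ℓ³, i.e. ∑_{n≥0} |α_{n+2} − α_n|³ < ∞. -/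
lemma young3 (x y z : ℝ) (hx : 0 ≤ x) (hy : 0 ≤ y) (hz : 0 ≤ z) :
    y * (x * z) ≤ x ^ 3 / 24 + y ^ 6 / 6 + 2 * z ^ 2 := by
  have h1 : x * y * z ≤ x ^ 2 * y ^ 2 / 8 + 2 * z ^ 2 := by
    nlinarith [sq_nonneg (x * y / 2 - 2 * z)]
  have h2 : x ^ 2 * y ^ 2 / 8 ≤ x ^ 3 / 24 + y ^ 6 / 6 := by
    nlinarith [mul_nonneg (sq_nonneg (x / 2 - y ^ 2)) (by positivity : (0:ℝ) ≤ 2 * (x / 2) + y ^ 2)]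
  nlinarith [h1, h2]

lemma young_comb (x1 x2 y z1 z2 : ℝ) (hx1 : 0 ≤ x1) (hx2 : 0 ≤ x2) (hy : 0 ≤ y)
    (hz1 : 0 ≤ z1) (hz2 : 0 ≤ z2) :
    y * ((x1 + x2) * (z1 + z2)) ≤ (x1 ^ 3 + x2 ^ 3) / 12 + (2 / 3) * y ^ 6 + 4 * (z1 ^ 2 + z2 ^ 2) := by
  have h11 := young3 x1 y z1 hx1 hy hz1
  have h12 := young3 x1 y z2 hx1 hy hz2
  have h21 := young3 x2 y z1 hx2 hy hz1
  have h22 := young3 x2 y z2 hx2 hy hz2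
  nlinarith [h11, h12, h21, h22]

lemma phi_diff (x y : ℂ) :
    ‖(starRingEnd ℂ) x * (‖x‖ : ℂ) - (starRingEnd ℂ) y * (‖y‖ : ℂ)‖ ≤ (‖x‖ + ‖y‖) * ‖x - y‖ := by
  have hid : (starRingEnd ℂ) x * (‖x‖ : ℂ) - (starRingEnd ℂ) y * (‖y‖ : ℂ)
      = (starRingEnd ℂ) (x - y) * (‖x‖ : ℂ) + (starRingEnd ℂ) y * (((‖x‖ - ‖y‖ : ℝ)) : ℂ) := by
    rw [map_sub]; push_cast; ring
  rw [hid]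
  have h1 : ‖(starRingEnd ℂ) (x - y) * (‖x‖ : ℂ)‖ = ‖x - y‖ * ‖x‖ := by
    rw [norm_mul, RCLike.norm_conj, Complex.norm_real, Real.norm_eq_abs, abs_of_nonneg (norm_nonneg x)]
  have h2 : ‖(starRingEnd ℂ) y * (((‖x‖ - ‖y‖ : ℝ)) : ℂ)‖ = ‖y‖ * |‖x‖ - ‖y‖| := by
    rw [norm_mul, RCLike.norm_conj, Complex.norm_real, Real.norm_eq_abs]
  calc _ ≤ ‖(starRingEnd ℂ) (x - y) * (‖x‖ : ℂ)‖ + ‖(starRingEnd ℂ) y * (((‖x‖ - ‖y‖ : ℝ)) : ℂ)‖ :=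
        norm_add_le _ _
    _ = ‖x - y‖ * ‖x‖ + ‖y‖ * |‖x‖ - ‖y‖| := by rw [h1, h2]
    _ ≤ (‖x‖ + ‖y‖) * ‖x - y‖ := by
        nlinarith [abs_norm_sub_norm_le x y, norm_nonneg y, norm_nonneg (x - y), abs_nonneg (‖x‖ - ‖y‖)]

lemma sum_shift2 {M : Type*} [AddCommMonoid M] (f : ℕ → M) (N : ℕ) :
    ∑ n ∈ Finset.range (N + 2), f n = (∑ n ∈ Finset.range N, f (n + 2)) + f 1 + f 0 := by
  rw [Finset.sum_range_succ' f (N + 1), Finset.sum_range_succ' (fun n => f (n + 1)) N]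

lemma core (α : ℕ → ℂ)
    (hd : Summable (fun n => ‖α (n + 3) - α (n + 2) - α (n + 1) + α n‖ ^ (2 : ℕ)))
    (ha : Summable (fun n => ‖α n‖ ^ (6 : ℕ))) :
    Summable (fun n => ‖α (n + 2) - α n‖ ^ (3 : ℕ)) := by
  set d : ℕ → ℂ := fun n => α (n + 3) - α (n + 2) - α (n + 1) + α n with hd_def
  set e : ℕ → ℂ := fun n => α (n + 2) - α n with he_def
  set T := ∑' n, ‖α n‖ ^ (6 : ℕ) with hT
  set D := ∑' n, ‖d n‖ ^ (2 : ℕ) with hDd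
  have hT0 : 0 ≤ T := tsum_nonneg (fun n => by positivity)
  have hD0 : 0 ≤ D := tsum_nonneg (fun n => by positivity)
  set Mb := max 1 T with hMb
  have hMb1 : (1 : ℝ) ≤ Mb := le_max_left _ _
  have hMb0 : (0 : ℝ) ≤ Mb := by linarith
  have hα : ∀ n, ‖α n‖ ≤ Mb := by
    intro n
    have h6 : ‖α n‖ ^ (6 : ℕ) ≤ T := Summable.le_tsum ha n (fun j _ => by positivity)
    rcases le_total (‖α n‖) 1 with h | h
    · exact h.trans hMb1
    · exact (le_self_pow₀ h (by norm_num)).trans (h6.trans (le_max_right _ _))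
  have he_bound : ∀ n, ‖e n‖ ≤ 2 * Mb := by
    intro n
    have := norm_sub_le (α (n + 2)) (α n)
    have h1 := hα (n + 2); have h2 := hα n
    simp only [he_def]
    linarith
  set φ : ℕ → ℂ := fun n => (starRingEnd ℂ) (e n) * (‖e n‖ : ℂ) with hφ_def
  have hmul : ∀ n, e n * φ n = ((‖e n‖ ^ (3 : ℕ) : ℝ) : ℂ) := by
    intro n
    simp only [hφ_def]
    have h : e n * ((starRingEnd ℂ) (e n) * (‖e n‖ : ℂ))
        = (e n * (starRingEnd ℂ) (e n)) * (‖e n‖ : ℂ) := by ring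
    rw [h, Complex.mul_conj, Complex.normSq_eq_norm_sq]
    push_cast
    ring
  have hφ_norm : ∀ n, ‖φ n‖ ≤ 4 * Mb ^ 2 := by
    intro n
    have : ‖φ n‖ = ‖e n‖ * ‖e n‖ := by
      simp only [hφ_def]
      rw [norm_mul, RCLike.norm_conj, Complex.norm_real, Real.norm_eq_abs,
        abs_of_nonneg (norm_nonneg _)]
    rw [this]
    nlinarith [he_bound n, norm_nonneg (e n)]
  have key : ∀ N, ∑ n ∈ Finset.range N, e n * φ n
      = (∑ n ∈ Finset.range N, α (n + 2) * (φ n - φ (n + 2)))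
        + α N * φ N + α (N + 1) * φ (N + 1) - α 0 * φ 0 - α 1 * φ 1 := by
    intro N
    induction N with
    | zero => simp
    | succ N ih =>
        rw [Finset.sum_range_succ, Finset.sum_range_succ, ih]
        have hEN : e N = α (N + 2) - α N := rfl
        have h2 : N + 1 + 1 = N + 2 := rfl
        rw [hEN, h2]
        ring
  have hS_eq : ∀ N, ∑ n ∈ Finset.range N, ‖e n‖ ^ (3 : ℕ)
      = ‖∑ n ∈ Finset.range N, e n * φ n‖ := by
    intro N
    rw [Finset.sum_congr rfl (fun n _ => hmul n), ← Complex.ofReal_sum,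
      Complex.norm_real, Real.norm_eq_abs,
      abs_of_nonneg (Finset.sum_nonneg (fun n _ => by positivity))]
  have hφd : ∀ n, ‖φ n - φ (n + 2)‖ ≤ (‖e n‖ + ‖e (n + 2)‖) * (‖d n‖ + ‖d (n + 1)‖) := by
    intro n
    have h1 : ‖φ n - φ (n + 2)‖ ≤ (‖e n‖ + ‖e (n + 2)‖) * ‖e n - e (n + 2)‖ := phi_diff _ _
    have h2 : e n - e (n + 2) = -(d n + d (n + 1)) := by
      simp only [he_def, hd_def]
      ring
    have h3 : ‖e n - e (n + 2)‖ ≤ ‖d n‖ + ‖d (n + 1)‖ := by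
      rw [h2, norm_neg]; exact norm_add_le _ _
    calc ‖φ n - φ (n + 2)‖ ≤ (‖e n‖ + ‖e (n + 2)‖) * ‖e n - e (n + 2)‖ := h1
      _ ≤ (‖e n‖ + ‖e (n + 2)‖) * (‖d n‖ + ‖d (n + 1)‖) := by
          apply mul_le_mul_of_nonneg_left h3
          positivity
  apply summable_of_sum_range_le (c := 21 * Mb ^ 3 + T + 10 * D) (fun n => by positivity)
  intro N
  set S := ∑ n ∈ Finset.range N, ‖e n‖ ^ (3 : ℕ) with hS_def
  -- bound the norm of the summation-by-parts expression
  have step1 : S ≤ (∑ n ∈ Finset.range N, ‖α (n + 2)‖ * ‖φ n - φ (n + 2)‖) + 16 * Mb ^ 3 := by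
    have h0 : S = ‖(∑ n ∈ Finset.range N, α (n + 2) * (φ n - φ (n + 2)))
        + α N * φ N + α (N + 1) * φ (N + 1) - α 0 * φ 0 - α 1 * φ 1‖ := by
      rw [hS_def, hS_eq, key]
    rw [h0]
    have hb : ∀ k, ‖α k * φ k‖ ≤ 4 * Mb ^ 3 := by
      intro k
      rw [norm_mul]
      have := hα k; have := hφ_norm k
      nlinarith [norm_nonneg (α k), norm_nonneg (φ k), pow_nonneg hMb0 2]
    calc ‖(∑ n ∈ Finset.range N, α (n + 2) * (φ n - φ (n + 2)))
        + α N * φ N + α (N + 1) * φ (N + 1) - α 0 * φ 0 - α 1 * φ 1‖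
        ≤ ‖(∑ n ∈ Finset.range N, α (n + 2) * (φ n - φ (n + 2)))
          + α N * φ N + α (N + 1) * φ (N + 1) - α 0 * φ 0‖ + ‖α 1 * φ 1‖ := norm_sub_le _ _
      _ ≤ ‖(∑ n ∈ Finset.range N, α (n + 2) * (φ n - φ (n + 2)))
          + α N * φ N + α (N + 1) * φ (N + 1)‖ + ‖α 0 * φ 0‖ + ‖α 1 * φ 1‖ := by
            have := norm_sub_le ((∑ n ∈ Finset.range N, α (n + 2) * (φ n - φ (n + 2)))
              + α N * φ N + α (N + 1) * φ (N + 1)) (α 0 * φ 0)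
            linarith
      _ ≤ ‖(∑ n ∈ Finset.range N, α (n + 2) * (φ n - φ (n + 2)))‖
          + ‖α N * φ N‖ + ‖α (N + 1) * φ (N + 1)‖ + ‖α 0 * φ 0‖ + ‖α 1 * φ 1‖ := by
            have h1 := norm_add_le ((∑ n ∈ Finset.range N, α (n + 2) * (φ n - φ (n + 2)))
              + α N * φ N) (α (N + 1) * φ (N + 1))
            have h2 := norm_add_le (∑ n ∈ Finset.range N, α (n + 2) * (φ n - φ (n + 2)))
              (α N * φ N)
            linarith
      _ ≤ (∑ n ∈ Finset.range N, ‖α (n + 2)‖ * ‖φ n - φ (n + 2)‖) + 16 * Mb ^ 3 := by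
            have h1 : ‖(∑ n ∈ Finset.range N, α (n + 2) * (φ n - φ (n + 2)))‖
                ≤ ∑ n ∈ Finset.range N, ‖α (n + 2)‖ * ‖φ n - φ (n + 2)‖ := by
              refine (norm_sum_le _ _).trans ?_
              apply le_of_eq
              exact Finset.sum_congr rfl (fun n _ => norm_mul _ _)
            have := hb N; have := hb (N + 1); have := hb 0; have := hb 1
            linarith
  -- pointwise Young bound
  have step2 : ∑ n ∈ Finset.range N, ‖α (n + 2)‖ * ‖φ n - φ (n + 2)‖
      ≤ ∑ n ∈ Finset.range N, ((‖e n‖ ^ 3 + ‖e (n + 2)‖ ^ 3) / 12 + (2 / 3) * ‖α (n + 2)‖ ^ 6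
          + 4 * (‖d n‖ ^ 2 + ‖d (n + 1)‖ ^ 2)) := by
    apply Finset.sum_le_sum
    intro n _
    have h1 : ‖α (n + 2)‖ * ‖φ n - φ (n + 2)‖
        ≤ ‖α (n + 2)‖ * ((‖e n‖ + ‖e (n + 2)‖) * (‖d n‖ + ‖d (n + 1)‖)) :=
      mul_le_mul_of_nonneg_left (hφd n) (norm_nonneg _)
    refine h1.trans ?_
    exact young_comb _ _ _ _ _ (norm_nonneg _) (norm_nonneg _) (norm_nonneg _)
      (norm_nonneg _) (norm_nonneg _)
  -- bound each summed piece
  have he3_bound : ∀ k, ‖e k‖ ^ (3 : ℕ) ≤ 8 * Mb ^ 3 := by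
    intro k
    have := pow_le_pow_left₀ (norm_nonneg (e k)) (he_bound k) 3
    nlinarith [this]
  have hsum_e2 : ∑ n ∈ Finset.range N, ‖e (n + 2)‖ ^ (3 : ℕ) ≤ S + 16 * Mb ^ 3 := by
    have h := sum_shift2 (fun n => ‖e n‖ ^ (3 : ℕ)) N
    have h2 : ∑ n ∈ Finset.range (N + 2), ‖e n‖ ^ (3 : ℕ)
        = S + ‖e N‖ ^ 3 + ‖e (N + 1)‖ ^ 3 := by
      rw [Finset.sum_range_succ, Finset.sum_range_succ]
    have := he3_bound N; have := he3_bound (N + 1)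
    have hpos1 : (0:ℝ) ≤ ‖e 1‖ ^ (3:ℕ) := by positivity
    have hpos0 : (0:ℝ) ≤ ‖e 0‖ ^ (3:ℕ) := by positivity
    linarith [h, h2]
  have hsum_a : ∑ n ∈ Finset.range N, ‖α (n + 2)‖ ^ (6 : ℕ) ≤ T := by
    have h := sum_shift2 (fun n => ‖α n‖ ^ (6 : ℕ)) N
    have h2 : ∑ n ∈ Finset.range (N + 2), ‖α n‖ ^ (6 : ℕ) ≤ T :=
      Summable.sum_le_tsum _ (fun i _ => by positivity) ha
    have hpos1 : (0:ℝ) ≤ ‖α 1‖ ^ (6:ℕ) := by positivity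
    have hpos0 : (0:ℝ) ≤ ‖α 0‖ ^ (6:ℕ) := by positivity
    linarith [h, h2]
  have hsum_d0 : ∑ n ∈ Finset.range N, ‖d n‖ ^ (2 : ℕ) ≤ D :=
    Summable.sum_le_tsum _ (fun i _ => by positivity) hd
  have hsum_d1 : ∑ n ∈ Finset.range N, ‖d (n + 1)‖ ^ (2 : ℕ) ≤ D := by
    have h := Finset.sum_range_succ' (fun n => ‖d n‖ ^ (2 : ℕ)) N
    have h2 : ∑ n ∈ Finset.range (N + 1), ‖d n‖ ^ (2 : ℕ) ≤ D :=
      Summable.sum_le_tsum _ (fun i _ => by positivity) hd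
    have hpos0 : (0:ℝ) ≤ ‖d 0‖ ^ (2:ℕ) := by positivity
    linarith [h, h2]
  -- combine
  have step3 : ∑ n ∈ Finset.range N, ((‖e n‖ ^ 3 + ‖e (n + 2)‖ ^ 3) / 12
      + (2 / 3) * ‖α (n + 2)‖ ^ 6 + 4 * (‖d n‖ ^ 2 + ‖d (n + 1)‖ ^ 2))
      ≤ (S + (S + 16 * Mb ^ 3)) / 12 + (2 / 3) * T + 4 * (D + D) := by
    rw [Finset.sum_add_distrib, Finset.sum_add_distrib]
    have e1 : ∑ n ∈ Finset.range N, (‖e n‖ ^ 3 + ‖e (n + 2)‖ ^ 3) / 12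
        ≤ (S + (S + 16 * Mb ^ 3)) / 12 := by
      rw [← Finset.sum_div, Finset.sum_add_distrib]
      have : ∑ n ∈ Finset.range N, ‖e n‖ ^ 3 = S := rfl
      linarith [hsum_e2]
    have e2 : ∑ n ∈ Finset.range N, (2 / 3) * ‖α (n + 2)‖ ^ 6 ≤ (2 / 3) * T := by
      rw [← Finset.mul_sum]
      linarith [hsum_a]
    have e3 : ∑ n ∈ Finset.range N, 4 * (‖d n‖ ^ 2 + ‖d (n + 1)‖ ^ 2) ≤ 4 * (D + D) := by
      rw [← Finset.mul_sum, Finset.sum_add_distrib]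
      linarith [hsum_d0, hsum_d1]
    linarith
  have hMb3 : (0:ℝ) ≤ Mb ^ 3 := by positivity
  linarith [step1, step2, step3]

lemma pow4_bound (x y : ℝ) (hx : 0 ≤ x) (hy : 0 ≤ y) : (x + y) ^ 4 ≤ 8 * (x ^ 4 + y ^ 4) := by
  nlinarith [sq_nonneg (x - y), sq_nonneg (x + y), sq_nonneg (x ^ 2 - y ^ 2), mul_nonneg hx hy]

lemma pow6_bound (x y : ℝ) (hx : 0 ≤ x) (hy : 0 ≤ y) : (x + y) ^ 6 ≤ 64 * (x ^ 6 + y ^ 6) := by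
  rcases le_total x y with h | h
  · have : (x + y) ^ 6 ≤ (2 * y) ^ 6 := pow_le_pow_left₀ (by linarith) (by linarith) 6
    nlinarith [pow_nonneg hx 6]
  · have : (x + y) ^ 6 ≤ (2 * x) ^ 6 := pow_le_pow_left₀ (by linarith) (by linarith) 6
    nlinarith [pow_nonneg hy 6]

lemma pow4_le (x : ℝ) (hx : 0 ≤ x) : x ^ 4 ≤ x ^ 3 + x ^ 6 := by
  rcases le_total x 1 with h | h
  · have : x ^ 4 ≤ x ^ 3 := pow_le_pow_of_le_one hx h (by norm_num)
    nlinarith [pow_nonneg hx 6]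
  · have : x ^ 4 ≤ x ^ 6 := pow_le_pow_right₀ h (by norm_num)
    nlinarith [pow_nonneg hx 3]

lemma esix (α : ℕ → ℂ) (ha : Summable (fun n => ‖α n‖ ^ (6 : ℕ))) :
    Summable (fun n => ‖α (n + 2) - α n‖ ^ (6 : ℕ)) := by
  have h2 : Summable (fun n => ‖α (n + 2)‖ ^ (6 : ℕ)) := (summable_nat_add_iff (f := fun n => ‖α n‖ ^ (6 : ℕ)) 2).mpr ha
  refine Summable.of_nonneg_of_le (fun n => by positivity)
    (fun n => ?_) (((h2.add ha).mul_left 64))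
  calc ‖α (n + 2) - α n‖ ^ (6 : ℕ) ≤ (‖α (n + 2)‖ + ‖α n‖) ^ (6 : ℕ) :=
        pow_le_pow_left₀ (norm_nonneg _) (norm_sub_le _ _) 6
    _ ≤ 64 * (‖α (n + 2)‖ ^ 6 + ‖α n‖ ^ 6) := pow6_bound _ _ (norm_nonneg _) (norm_nonneg _)

theorem stmt5 (α : ℕ → ℂ) :
    ((Summable (fun n => ‖α (n + 3) - α (n + 2) - α (n + 1) + α n‖ ^ (2 : ℕ)) ∧
        Summable (fun n => ‖α (n + 2) - 2 * α (n + 1) + α n‖ ^ (4 : ℕ)) ∧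
        Summable (fun n => ‖α n‖ ^ (6 : ℕ))) ↔
      (Summable (fun n => ‖α (n + 3) - α (n + 2) - α (n + 1) + α n‖ ^ (2 : ℕ)) ∧
        Summable (fun n => ‖α (n + 1) - α n‖ ^ (4 : ℕ)) ∧
        Summable (fun n => ‖α n‖ ^ (6 : ℕ)))) ∧
    ((Summable (fun n => ‖α (n + 3) - α (n + 2) - α (n + 1) + α n‖ ^ (2 : ℕ)) ∧
        Summable (fun n => ‖α (n + 2) - 2 * α (n + 1) + α n‖ ^ (4 : ℕ)) ∧
        Summable (fun n => ‖α n‖ ^ (6 : ℕ))) →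
      Summable (fun n => ‖α (n + 2) - α n‖ ^ (3 : ℕ))) := by
  constructor
  · constructor
    · rintro ⟨h1, h2, h3⟩
      refine ⟨h1, ?_, h3⟩
      -- e = (S²-1)α ∈ ℓ³ by the core lemma, hence e ∈ ℓ⁴ (as e ∈ ℓ⁶ too);
      -- then 2(α (n+2) - α (n+1)) = e n + ((S-1)²α) n gives (S-1)α ∈ ℓ⁴.
      have he3 := core α h1 h3
      have he6 := esix α h3
      have he4 : Summable (fun n => ‖α (n + 2) - α n‖ ^ (4 : ℕ)) := by
        refine Summable.of_nonneg_of_le (fun n => by positivity) (fun n => ?_) (he3.add he6)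
        exact pow4_le _ (norm_nonneg _)
      have hgoal : Summable (fun n => ‖α (n + 1 + 1) - α (n + 1)‖ ^ (4 : ℕ)) := by
        refine Summable.of_nonneg_of_le (fun n => by positivity) (fun n => ?_) (he4.add h2)
        have hid : α (n + 1 + 1) - α (n + 1)
            = ((α (n + 2) - α n) + (α (n + 2) - 2 * α (n + 1) + α n)) / 2 := by
          have h' : n + 1 + 1 = n + 2 := rfl
          rw [h']; ring
        have hn : ‖α (n + 1 + 1) - α (n + 1)‖
            ≤ (‖α (n + 2) - α n‖ + ‖α (n + 2) - 2 * α (n + 1) + α n‖) / 2 := by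
          rw [hid]
          calc ‖((α (n + 2) - α n) + (α (n + 2) - 2 * α (n + 1) + α n)) / 2‖
              = ‖(α (n + 2) - α n) + (α (n + 2) - 2 * α (n + 1) + α n)‖ / 2 := by
                rw [norm_div]; norm_num
            _ ≤ (‖α (n + 2) - α n‖ + ‖α (n + 2) - 2 * α (n + 1) + α n‖) / 2 := by
                have := norm_add_le (α (n + 2) - α n) (α (n + 2) - 2 * α (n + 1) + α n)
                linarith
        calc ‖α (n + 1 + 1) - α (n + 1)‖ ^ (4 : ℕ)
            ≤ ((‖α (n + 2) - α n‖ + ‖α (n + 2) - 2 * α (n + 1) + α n‖) / 2) ^ (4 : ℕ) :=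
              pow_le_pow_left₀ (norm_nonneg _) hn 4
          _ ≤ ‖α (n + 2) - α n‖ ^ 4 + ‖α (n + 2) - 2 * α (n + 1) + α n‖ ^ 4 := by
              have hb := pow4_bound (‖α (n + 2) - α n‖) (‖α (n + 2) - 2 * α (n + 1) + α n‖)
                (norm_nonneg _) (norm_nonneg _)
              have h16 : ((‖α (n + 2) - α n‖ + ‖α (n + 2) - 2 * α (n + 1) + α n‖) / 2) ^ (4:ℕ)
                  = (‖α (n + 2) - α n‖ + ‖α (n + 2) - 2 * α (n + 1) + α n‖) ^ (4:ℕ) / 16 := by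
                ring
              have p1 : (0:ℝ) ≤ ‖α (n + 2) - α n‖ ^ (4:ℕ) := by positivity
              have p2 : (0:ℝ) ≤ ‖α (n + 2) - 2 * α (n + 1) + α n‖ ^ (4:ℕ) := by positivity
              rw [h16]
              linarith
      exact (summable_nat_add_iff (f := fun n => ‖α (n + 1) - α n‖ ^ (4 : ℕ)) 1).mp hgoal
    · rintro ⟨h1, h2, h3⟩
      refine ⟨h1, ?_, h3⟩
      have h2' : Summable (fun n => ‖α (n + 1 + 1) - α (n + 1)‖ ^ (4 : ℕ)) :=
        (summable_nat_add_iff (f := fun n => ‖α (n + 1) - α n‖ ^ (4 : ℕ)) 1).mpr h2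
      refine Summable.of_nonneg_of_le (fun n => by positivity) (fun n => ?_)
        ((h2'.add h2).mul_left 8)
      have hid : α (n + 2) - 2 * α (n + 1) + α n
          = (α (n + 1 + 1) - α (n + 1)) - (α (n + 1) - α n) := by
        have h' : n + 1 + 1 = n + 2 := rfl
        rw [h']; ring
      have hn : ‖α (n + 2) - 2 * α (n + 1) + α n‖
          ≤ ‖α (n + 1 + 1) - α (n + 1)‖ + ‖α (n + 1) - α n‖ := by
        rw [hid]; exact norm_sub_le _ _
      calc ‖α (n + 2) - 2 * α (n + 1) + α n‖ ^ (4 : ℕ)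
          ≤ (‖α (n + 1 + 1) - α (n + 1)‖ + ‖α (n + 1) - α n‖) ^ (4 : ℕ) :=
            pow_le_pow_left₀ (norm_nonneg _) hn 4
        _ ≤ 8 * (‖α (n + 1 + 1) - α (n + 1)‖ ^ 4 + ‖α (n + 1) - α n‖ ^ 4) :=
            pow4_bound _ _ (norm_nonneg _) (norm_nonneg _)
  · rintro ⟨h1, _, h3⟩
    exact core α h1 h3
end

section
/- For every θ ∈ ℝ, the function ψ ↦ log|e^{iψ} − e^{iθ}| is Lebesgue integrable on [0,2π], and for every nonzero integer n, −∫₀^{2π} e^{inψ} log|e^{iψ} − e^{iθ}| dψ/(2π) = e^{inθ}/(2|n|); for n = 0 the integral ∫₀^{2π} log|e^{iψ} − e^{iθ}| dψ/(2π) equals 0. -/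
open Real MeasureTheory intervalIntegral Complex

noncomputable def FF (r : ℝ) (ψ : ℝ) : ℝ :=
  Real.log (‖1 - r * Complex.exp (ψ * Complex.I)‖)

noncomputable def GG (ψ : ℝ) : ℝ :=
  Real.log 2 + Real.log π + |Real.log ψ| + |Real.log (2 * π - ψ)|

-- log integrable on [0, 2π]
lemma logII : IntervalIntegrable Real.log volume 0 (2 * π) := by
  have h1 : IntervalIntegrable Real.log volume 0 1 := by
    have h : IntegrableOn (fun x : ℝ => -Real.log x) (Set.Ioc (0:ℝ) 1) volume := by
      apply intervalIntegral.integrableOn_deriv_of_nonneg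
        (g := fun x => x - x * Real.log x)
      · exact (continuous_id.sub Real.continuous_mul_log).continuousOn
      · intro x hx
        have := (hasDerivAt_id x).sub (Real.hasDerivAt_mul_log (ne_of_gt hx.1))
        exact this.congr_deriv (by ring)
      · intro x hx
        simp only [neg_nonneg]
        exact Real.log_nonpos hx.1.le hx.2.le
    rw [intervalIntegrable_iff_integrableOn_Ioc_of_le zero_le_one]
    exact (integrable_neg_iff.mp h)
  exact h1.trans (intervalIntegrable_log (by
    simp only [Set.mem_uIcc]
    push_neg
    constructor <;> intro h <;> nlinarith [Real.pi_gt_three]))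

lemma sq_abs_one_sub (r ψ : ℝ) :
    (‖1 - (r:ℂ) * Complex.exp ((ψ:ℂ) * Complex.I)‖)^2
      = 1 - 2 * r * Real.cos ψ + r^2 := by
  rw [Complex.sq_norm, Complex.normSq_apply]
  simp [Complex.exp_ofReal_mul_I_re, Complex.exp_ofReal_mul_I_im]
  nlinarith [Real.sin_sq_add_cos_sq ψ]

lemma abs_one_sub_le (r ψ : ℝ) (hr : r ∈ Set.Icc (1/2:ℝ) 1) :
    ‖1 - (r:ℂ) * Complex.exp ((ψ:ℂ) * Complex.I)‖ ≤ 2 := by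
  have h0 := norm_nonneg (1 - (r:ℂ) * Complex.exp ((ψ:ℂ) * Complex.I))
  have h := sq_abs_one_sub r ψ
  nlinarith [Real.neg_one_le_cos ψ, hr.1, hr.2]

lemma sin_half_le_abs (r ψ : ℝ) (hr : r ∈ Set.Icc (1/2:ℝ) 1) :
    Real.sin (ψ/2) ≤ ‖1 - (r:ℂ) * Complex.exp ((ψ:ℂ) * Complex.I)‖ := by
  rcases le_or_gt (Real.sin (ψ/2)) 0 with h | h
  · exact h.trans (norm_nonneg _)
  have h0 := norm_nonneg (1 - (r:ℂ) * Complex.exp ((ψ:ℂ) * Complex.I))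
  have hs := sq_abs_one_sub r ψ
  have hhalf : Real.sin (ψ/2)^2 = 1/2 - Real.cos (2*(ψ/2))/2 := Real.sin_sq_eq_half_sub (ψ/2)
  rw [show 2*(ψ/2) = ψ by ring] at hhalf
  nlinarith [Real.neg_one_le_cos ψ, Real.cos_le_one ψ, hr.1, hr.2]

lemma min_le_sin_half {ψ : ℝ} (h : ψ ∈ Set.Ioo 0 (2*π)) :
    min ψ (2*π - ψ) / π ≤ Real.sin (ψ/2) := by
  have hπ := Real.pi_pos
  rcases le_or_gt ψ π with hle | hlt
  · have : 2/π * (ψ/2) ≤ Real.sin (ψ/2) :=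
      Real.mul_le_sin (by linarith [h.1]) (by linarith)
    calc min ψ (2*π - ψ) / π ≤ ψ / π := by
          gcongr
          exact min_le_left _ _
      _ = 2/π * (ψ/2) := by ring
      _ ≤ _ := this
  · have h2 : Real.sin (ψ/2) = Real.sin (π - ψ/2) := (Real.sin_pi_sub _).symm
    have : 2/π * (π - ψ/2) ≤ Real.sin (π - ψ/2) :=
      Real.mul_le_sin (by linarith [h.2]) (by linarith)
    rw [h2]
    calc min ψ (2*π - ψ) / π ≤ (2*π - ψ) / π := by
          gcongr
          exact min_le_right _ _
      _ = 2/π * (π - ψ/2) := by ring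
      _ ≤ _ := this

lemma FF_bound {r ψ : ℝ} (hr : r ∈ Set.Icc (1/2:ℝ) 1) (hψ : ψ ∈ Set.Ioo 0 (2*π)) :
    |FF r ψ| ≤ GG ψ := by
  have hπ := Real.pi_pos
  have hπ1 : (1:ℝ) ≤ π := by linarith [Real.pi_gt_three]
  set A := ‖1 - (r:ℂ) * Complex.exp ((ψ:ℂ) * Complex.I)‖ with hA
  have hmin : (0:ℝ) < min ψ (2*π - ψ) := lt_min hψ.1 (by linarith [hψ.2])
  have hlow : min ψ (2*π - ψ) / π ≤ A := (min_le_sin_half hψ).trans (sin_half_le_abs r ψ hr)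
  have hApos : 0 < A := lt_of_lt_of_le (by positivity) hlow
  have hA2 : A ≤ 2 := abs_one_sub_le r ψ hr
  have hlogmin : -( |Real.log ψ| + |Real.log (2*π - ψ)| ) ≤ Real.log (min ψ (2*π - ψ)) := by
    rcases min_cases ψ (2*π - ψ) with ⟨he, _⟩ | ⟨he, _⟩ <;> rw [he] <;>
      [(have := neg_abs_le (Real.log ψ)); (have := neg_abs_le (Real.log (2*π - ψ)))] <;>
      [(have h2 := abs_nonneg (Real.log (2*π - ψ))); (have h2 := abs_nonneg (Real.log ψ))] <;>
      linarith
  rw [abs_le]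
  constructor
  · have h1 : Real.log (min ψ (2*π - ψ) / π) ≤ Real.log A := Real.log_le_log (by positivity) hlow
    rw [Real.log_div hmin.ne' hπ.ne'] at h1
    have hl2 : (0:ℝ) ≤ Real.log 2 := Real.log_nonneg (by norm_num)
    simp only [GG, FF, ← hA]
    nlinarith [h1, hlogmin]
  · have h1 : Real.log A ≤ Real.log 2 := Real.log_le_log hApos hA2
    have hlπ : (0:ℝ) ≤ Real.log π := Real.log_nonneg hπ1
    have := abs_nonneg (Real.log ψ); have := abs_nonneg (Real.log (2*π - ψ))
    simp only [GG, FF, ← hA]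
    linarith

lemma abs_pos_lb {r ψ : ℝ} (hr : r ∈ Set.Icc (1/2:ℝ) 1) (hψ : ψ ∈ Set.Ioo 0 (2*π)) :
    min ψ (2*π - ψ) / π ≤ ‖1 - (r:ℂ) * Complex.exp ((ψ:ℂ)*Complex.I)‖ :=
  (min_le_sin_half hψ).trans (sin_half_le_abs r ψ hr)

lemma E_int (m : ℤ) :
    ∫ ψ in (0:ℝ)..(2*π), Complex.exp ((m:ℂ)*ψ*Complex.I)
      = if m = 0 then (2*π:ℂ) else 0 := by
  by_cases hm : m = 0
  · simp [hm, Complex.ofReal_mul]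
  · simp only [hm, if_false]
    have hc : (m:ℂ) * Complex.I ≠ 0 :=
      mul_ne_zero (Int.cast_ne_zero.2 hm) Complex.I_ne_zero
    have harg : ∀ ψ:ℝ, (m:ℂ)*ψ*Complex.I = ((m:ℂ)*Complex.I)*ψ := fun ψ => by ring
    simp_rw [harg]
    rw [integral_exp_mul_complex hc]
    have h1 : Complex.exp ((m:ℂ)*Complex.I*(2*π:ℝ)) = 1 := by
      rw [show (m:ℂ)*Complex.I*(2*π:ℝ) = (m:ℂ)*(2*(π:ℂ)*Complex.I) by push_cast; ring]
      exact Complex.exp_int_mul_two_pi_mul_I m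
    rw [h1]
    simp

lemma setInt_eq (g : ℝ → ℂ) :
    ∫ ψ in Set.Ioo (0:ℝ) (2*π), g ψ = ∫ ψ in (0:ℝ)..(2*π), g ψ := by
  rw [intervalIntegral.integral_of_le (by positivity), integral_Ioc_eq_integral_Ioo]

lemma coeff (n : ℤ) {r : ℝ} (hr : r ∈ Set.Ioo (0:ℝ) 1) :
    ∫ ψ in Set.Ioo (0:ℝ) (2*π), Complex.exp ((n:ℂ)*ψ*Complex.I) * (FF r ψ : ℂ)
      = -((π:ℂ) * (r:ℂ)^n.natAbs / (n.natAbs : ℂ)) := by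
  have hπ := Real.pi_pos
  set s : Set ℝ := Set.Ioo (0:ℝ) (2*π) with hs
  set term : ℕ → ℝ → ℂ := fun k ψ =>
    -(Complex.exp ((n:ℂ)*ψ*Complex.I) *
      ((((r:ℂ) * Complex.exp ((ψ:ℂ)*Complex.I))^k / (k:ℂ)).re : ℂ)) with hterm
  -- pointwise HasSum
  have hz : ∀ ψ:ℝ, ‖(r:ℂ) * Complex.exp ((ψ:ℂ)*Complex.I)‖ < 1 := by
    intro ψ
    rw [norm_mul, Complex.norm_real, Real.norm_eq_abs,
      Complex.norm_exp_ofReal_mul_I, mul_one, abs_of_pos hr.1]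
    exact hr.2
  have hsum : ∀ ψ:ℝ, HasSum (fun k => term k ψ)
      (Complex.exp ((n:ℂ)*ψ*Complex.I) * (FF r ψ : ℂ)) := by
    intro ψ
    have h1 := Complex.hasSum_taylorSeries_neg_log (hz ψ)
    have h2 := Complex.ofRealCLM.hasSum (Complex.reCLM.hasSum h1)
    simp only [Complex.ofRealCLM_apply, Complex.reCLM_apply] at h2
    have hre : (((-Complex.log (1 - (r:ℂ) * Complex.exp ((ψ:ℂ)*Complex.I))).re : ℝ) : ℂ)
        = -((FF r ψ : ℝ) : ℂ) := by
      simp only [Complex.neg_re, Complex.log_re, FF]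
      push_cast
      ring
    rw [hre] at h2
    have h3 := h2.mul_left (-(Complex.exp ((n:ℂ)*ψ*Complex.I)))
    have he1 : (fun k : ℕ => -(Complex.exp ((n:ℂ)*ψ*Complex.I)) *
        (((((r:ℂ) * Complex.exp ((ψ:ℂ)*Complex.I))^k / (k:ℂ)).re : ℝ) : ℂ)) = fun k => term k ψ := by
      funext k
      rw [hterm]
      ring
    have he2 : -(Complex.exp ((n:ℂ)*ψ*Complex.I)) * (-((FF r ψ : ℝ) : ℂ))
        = Complex.exp ((n:ℂ)*ψ*Complex.I) * (FF r ψ : ℂ) := by ring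
    rw [he1, he2] at h3
    exact h3
  -- integrability of terms
  have hcont : ∀ k, Continuous (term k) := by
    intro k
    apply Continuous.neg
    apply Continuous.mul
    · exact Complex.continuous_exp.comp (by fun_prop)
    · exact Complex.continuous_ofReal.comp (Complex.continuous_re.comp (by fun_prop))
  have hInt : ∀ k, Integrable (term k) (volume.restrict s) := by
    intro k
    exact ((hcont k).integrableOn_Icc (a := 0) (b := 2*π)).mono_set Set.Ioo_subset_Icc_self
  -- norm bound
  have hbd : ∀ k (ψ : ℝ), ‖term k ψ‖ ≤ r^k := by
    intro k ψ
    have he : ‖Complex.exp ((n:ℂ)*ψ*Complex.I)‖ = 1 := by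
      rw [show (n:ℂ)*ψ*Complex.I = (((n*ψ : ℝ)):ℂ)*Complex.I by push_cast; ring]
      rw [Complex.norm_exp_ofReal_mul_I]
    rw [hterm]
    simp only [norm_neg, norm_mul, he, one_mul, Complex.norm_real]
    have hre_le : ‖(((r:ℂ) * Complex.exp ((ψ:ℂ)*Complex.I))^k / (k:ℂ)).re‖
        ≤ ‖((r:ℂ) * Complex.exp ((ψ:ℂ)*Complex.I))^k / (k:ℂ)‖ := Complex.abs_re_le_norm _
    refine hre_le.trans ?_
    rw [norm_div, norm_pow]
    have hz' : ‖(r:ℂ) * Complex.exp ((ψ:ℂ)*Complex.I)‖ = r := by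
      rw [norm_mul, Complex.norm_real, Real.norm_eq_abs,
        Complex.norm_exp_ofReal_mul_I, mul_one, abs_of_pos hr.1]
    rw [hz']
    rcases Nat.eq_zero_or_pos k with rfl | hk
    · simp
    · have h1k : (1:ℝ) ≤ ‖(k:ℂ)‖ := by
        rw [Complex.norm_natCast]
        exact_mod_cast hk
      exact div_le_self (pow_nonneg hr.1.le k) h1k
  -- summability of integrals of norms
  have hμs : volume s < ⊤ := by
    rw [hs, Real.volume_Ioo]
    exact ENNReal.ofReal_lt_top
  have hμs' : (volume s).toReal = 2*π := by
    rw [hs, Real.volume_Ioo, ENNReal.toReal_ofReal (by nlinarith)]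
    ring
  have hsummable : Summable fun k => ∫ ψ in s, ‖term k ψ‖ := by
    apply Summable.of_nonneg_of_le
      (fun k => integral_nonneg (fun ψ => norm_nonneg _))
      (fun k => ?_)
      ((summable_geometric_of_lt_one hr.1.le hr.2).mul_left (2*π))
    have h := norm_setIntegral_le_of_norm_le_const (μ := volume) (s := s)
      (f := fun ψ => ‖term k ψ‖) (C := r^k) hμs
      (fun x _ => by rw [norm_norm]; exact hbd k x)
    rw [Measure.real_def, hμs'] at h
    calc ∫ ψ in s, ‖term k ψ‖ ≤ ‖∫ ψ in s, ‖term k ψ‖‖ := le_abs_self _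
      _ ≤ r^k * (2*π) := h
      _ = 2*π * r^k := by ring
  -- interchange
  have hI := hasSum_integral_of_summable_integral_norm (μ := volume.restrict s) hInt hsummable
  have htsum : ∀ ψ:ℝ, (∑' k, term k ψ) = Complex.exp ((n:ℂ)*ψ*Complex.I) * (FF r ψ : ℂ) :=
    fun ψ => (hsum ψ).tsum_eq
  simp_rw [htsum] at hI
  -- values of the term integrals
  have hval : ∀ k : ℕ, (∫ ψ in s, term k ψ)
      = if k = n.natAbs then -((π:ℂ) * (r:ℂ)^k / (k:ℂ)) else 0 := by
    intro k
    rcases Nat.eq_zero_or_pos k with rfl | hk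
    · by_cases h0 : (0:ℕ) = n.natAbs
      · rw [← h0]
        simp [hterm]
      · simp only [h0, if_false, hterm]
        simp
    · have hKc : ((k:ℂ)) ≠ 0 := Nat.cast_ne_zero.2 hk.ne'
      have key : ∀ ψ:ℝ, term k ψ =
          -((r:ℂ)^k/(2*(k:ℂ))) * (Complex.exp (((n+(k:ℤ)):ℂ)*ψ*Complex.I)
            + Complex.exp (((n-(k:ℤ)):ℂ)*ψ*Complex.I)) := by
        intro ψ
        have h1 : ((r:ℂ)*Complex.exp ((ψ:ℂ)*Complex.I))^k / (k:ℂ)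
            = ((r^k/k : ℝ):ℂ) * Complex.exp ((((k*ψ : ℝ)):ℂ)*Complex.I) := by
          rw [mul_pow, ← Complex.exp_nat_mul]
          push_cast
          ring
        have h2 : ((((r^k/k:ℝ):ℂ) * Complex.exp ((((k*ψ:ℝ)):ℂ)*Complex.I)).re : ℝ)
            = (r^k/k) * Real.cos (k*ψ) := by
          rw [Complex.re_ofReal_mul, Complex.exp_ofReal_mul_I_re]
        have hA : Complex.exp (((n+(k:ℤ)):ℂ)*ψ*Complex.I)
            = Complex.exp ((n:ℂ)*ψ*Complex.I) * Complex.exp (((k:ℂ)*ψ)*Complex.I) := by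
          rw [← Complex.exp_add]
          congr 1
          push_cast
          ring
        have hB : Complex.exp (((n-(k:ℤ)):ℂ)*ψ*Complex.I)
            = Complex.exp ((n:ℂ)*ψ*Complex.I) * Complex.exp (-((k:ℂ)*ψ)*Complex.I) := by
          rw [← Complex.exp_add]
          congr 1
          push_cast
          ring
        have hcos : Complex.cos ((k:ℂ)*ψ) = (Complex.exp (((k:ℂ)*ψ)*Complex.I)
            + Complex.exp (-((k:ℂ)*ψ)*Complex.I))/2 := by
          rw [eq_div_iff (two_ne_zero' ℂ)]
          rw [← Complex.two_cos]
          ring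
        rw [hterm]
        simp only []
        rw [h1, h2, hA, hB]
        push_cast [Complex.ofReal_cos]
        rw [hcos]
        field_simp
      simp_rw [key]
      rw [hs, setInt_eq]
      have hint1 : IntervalIntegrable (fun ψ:ℝ => Complex.exp (((n+(k:ℤ)):ℂ)*ψ*Complex.I))
          volume 0 (2*π) := (Complex.continuous_exp.comp (by fun_prop)).intervalIntegrable _ _
      have hint2 : IntervalIntegrable (fun ψ:ℝ => Complex.exp (((n-(k:ℤ)):ℂ)*ψ*Complex.I))
          volume 0 (2*π) := (Complex.continuous_exp.comp (by fun_prop)).intervalIntegrable _ _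
      rw [intervalIntegral.integral_const_mul, intervalIntegral.integral_add hint1 hint2,
        show ((n:ℂ) + (((k:ℤ)):ℂ)) = (((n + (k:ℤ)):ℤ):ℂ) from by push_cast; ring,
        show ((n:ℂ) - (((k:ℤ)):ℂ)) = (((n - (k:ℤ)):ℤ):ℂ) from by push_cast; ring,
        E_int, E_int]
      by_cases hpk : n + (k:ℤ) = 0
      · have hmk : ¬ (n - (k:ℤ) = 0) := by omega
        have hkn : k = n.natAbs := by omega
        rw [if_pos hpk, if_neg hmk, if_pos hkn]
        field_simp
        ring
      · by_cases hmk : n - (k:ℤ) = 0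
        · have hkn : k = n.natAbs := by omega
          rw [if_pos hmk, if_neg hpk, if_pos hkn]
          field_simp
          ring
        · have hkn : ¬ (k = n.natAbs) := by omega
          rw [if_neg hmk, if_neg hpk, if_neg hkn]
          ring
  simp_rw [hval] at hI
  have hfin := hasSum_ite_eq n.natAbs (-((π:ℂ) * (r:ℂ)^n.natAbs / (n.natAbs : ℂ)))
  have heq : (fun k : ℕ => if k = n.natAbs then -((π:ℂ) * (r:ℂ)^k / (k:ℂ)) else 0)
      = fun k : ℕ => if k = n.natAbs then -((π:ℂ) * (r:ℂ)^n.natAbs / (n.natAbs:ℂ)) else 0 := by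
    funext k
    by_cases hkn : k = n.natAbs <;> simp [hkn]
  rw [heq] at hI
  rw [hs] at hI
  exact hI.unique hfin

lemma GG_II : IntervalIntegrable GG volume 0 (2*π) := by
  have hπ := Real.pi_pos
  have h1 : IntervalIntegrable (fun ψ : ℝ => |Real.log ψ|) volume 0 (2*π) := logII.abs
  have h2 : IntervalIntegrable (fun ψ : ℝ => |Real.log (2*π - ψ)|) volume 0 (2*π) := by
    have := (logII.abs.comp_sub_left (2*π)).symm
    simpa using this
  have h0 : IntervalIntegrable (fun _ : ℝ => Real.log 2 + Real.log π) volume 0 (2*π) :=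
    intervalIntegrable_const
  exact (h0.add h1).add h2

lemma GG_intOn : IntegrableOn GG (Set.Ioo 0 (2*π)) volume := by
  have hπ := Real.pi_pos
  exact ((intervalIntegrable_iff_integrableOn_Ioc_of_le (by positivity)).mp GG_II).mono_set
    Set.Ioo_subset_Ioc_self

lemma FF_cont_abs (r : ℝ) : Continuous (fun ψ : ℝ => ‖1 - (r:ℂ) * Complex.exp ((ψ:ℂ)*Complex.I)‖) :=
  continuous_norm.comp (by fun_prop)

lemma FF_meas (r : ℝ) : Measurable (FF r) :=
  Real.measurable_log.comp (FF_cont_abs r).measurable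

lemma FF_intOn {r : ℝ} (hr : r ∈ Set.Icc (1/2:ℝ) 1) :
    IntegrableOn (FF r) (Set.Ioo 0 (2*π)) volume := by
  refine Integrable.mono' GG_intOn ((FF_meas r).aestronglyMeasurable.restrict) ?_
  rw [ae_restrict_iff' measurableSet_Ioo]
  exact ae_of_all _ fun ψ hψ => by
    rw [Real.norm_eq_abs]; exact FF_bound hr hψ

lemma rj_lemma : ∃ u : ℕ → ℝ, (∀ j, u j ∈ Set.Ioo (0:ℝ) 1 ∧ u j ∈ Set.Icc (1/2:ℝ) 1) ∧
    Filter.Tendsto u Filter.atTop (nhds 1) := by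
  refine ⟨fun j => 1 - 1/((j:ℝ)+2), fun j => ?_, ?_⟩
  · have h2 : (0:ℝ) < (j:ℝ)+2 := by positivity
    have h3 : 1/((j:ℝ)+2) ≤ 1/2 := by
      rw [div_le_div_iff₀ h2 two_pos]
      linarith
    have h4 : 0 < 1/((j:ℝ)+2) := by positivity
    constructor
    · constructor <;> [linarith; linarith]
    · constructor <;> [linarith; linarith]
  · have h := tendsto_one_div_add_atTop_nhds_zero_nat (𝕜 := ℝ)
    have h2 : Filter.Tendsto (fun j : ℕ => 1/((j:ℝ)+2)) Filter.atTop (nhds 0) := by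
      have := h.comp (Filter.tendsto_add_atTop_nat 1)
      convert this using 2 with j
      simp only [Function.comp_apply]
      push_cast
      ring
    have := Filter.Tendsto.const_sub (1:ℝ) h2
    simpa using this

lemma coeff_one (n : ℤ) :
    ∫ ψ in Set.Ioo (0:ℝ) (2*π), Complex.exp ((n:ℂ)*ψ*Complex.I) * (FF 1 ψ : ℂ)
      = -((π:ℂ) / (n.natAbs : ℂ)) := by
  have hπ := Real.pi_pos
  obtain ⟨u, hu, hulim⟩ := rj_lemma
  set Fj : ℕ → ℝ → ℂ := fun j ψ => Complex.exp ((n:ℂ)*ψ*Complex.I) * (FF (u j) ψ : ℂ) with hFj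
  set f : ℝ → ℂ := fun ψ => Complex.exp ((n:ℂ)*ψ*Complex.I) * (FF 1 ψ : ℂ) with hf
  have hmeasC : ∀ r : ℝ, AEStronglyMeasurable
      (fun ψ : ℝ => Complex.exp ((n:ℂ)*ψ*Complex.I) * (FF r ψ : ℂ))
      (volume.restrict (Set.Ioo (0:ℝ) (2*π))) := by
    intro r
    apply Measurable.aestronglyMeasurable
    exact ((Complex.continuous_exp.comp (by fun_prop : Continuous fun ψ:ℝ =>
      (n:ℂ)*ψ*Complex.I)).measurable).mul (Complex.measurable_ofReal.comp (FF_meas r))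
  have hnorm : ∀ r : ℝ, ∀ ψ : ℝ, ‖Complex.exp ((n:ℂ)*ψ*Complex.I) * (FF r ψ : ℂ)‖ = |FF r ψ| := by
    intro r ψ
    rw [norm_mul, show (n:ℂ)*ψ*Complex.I = (((n*ψ : ℝ)):ℂ)*Complex.I by push_cast; ring,
      Complex.norm_exp_ofReal_mul_I, one_mul, Complex.norm_real,
      Real.norm_eq_abs]
  have hbound : ∀ j : ℕ, ∀ᵐ ψ ∂(volume.restrict (Set.Ioo (0:ℝ) (2*π))), ‖Fj j ψ‖ ≤ GG ψ := by
    intro j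
    rw [ae_restrict_iff' measurableSet_Ioo]
    refine ae_of_all _ fun ψ hψ => ?_
    rw [hFj]
    simp only []
    rw [hnorm]
    exact FF_bound (hu j).2 hψ
  have hconv : ∀ᵐ ψ ∂(volume.restrict (Set.Ioo (0:ℝ) (2*π))),
      Filter.Tendsto (fun j => Fj j ψ) Filter.atTop (nhds (f ψ)) := by
    rw [ae_restrict_iff' measurableSet_Ioo]
    refine ae_of_all _ fun ψ hψ => ?_
    have habs_pos : 0 < ‖1 - ((1:ℝ):ℂ) * Complex.exp ((ψ:ℂ)*Complex.I)‖ := by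
      refine lt_of_lt_of_le ?_ (abs_pos_lb (by norm_num) hψ)
      have := lt_min hψ.1 (by linarith [hψ.2] : (0:ℝ) < 2*π - ψ)
      positivity
    have h1 : Filter.Tendsto (fun j => 1 - ((u j : ℝ):ℂ) * Complex.exp ((ψ:ℂ)*Complex.I))
        Filter.atTop (nhds (1 - ((1:ℝ):ℂ) * Complex.exp ((ψ:ℂ)*Complex.I))) := by
      apply Filter.Tendsto.const_sub
      exact (((Complex.continuous_ofReal.tendsto 1).comp hulim).mul_const _)
    have h2 := (continuous_norm.tendsto _).comp h1
    have h3 := ((Real.continuousAt_log habs_pos.ne').tendsto).comp h2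
    have h4 := (Complex.continuous_ofReal.tendsto _).comp h3
    exact (h4.const_mul (Complex.exp ((n:ℂ)*ψ*Complex.I)))
  have hDCT := MeasureTheory.tendsto_integral_of_dominated_convergence GG
    (fun j => hmeasC (u j)) GG_intOn hbound hconv
  have hvals : ∀ j, (∫ ψ in Set.Ioo (0:ℝ) (2*π), Fj j ψ)
      = -((π:ℂ) * ((u j : ℝ):ℂ)^n.natAbs / (n.natAbs : ℂ)) := fun j => coeff n (hu j).1
  change Filter.Tendsto (fun j => ∫ ψ in Set.Ioo (0:ℝ) (2*π), Fj j ψ) Filter.atTop _ at hDCT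
  simp_rw [hvals] at hDCT
  have hlim2 : Filter.Tendsto (fun j => -((π:ℂ) * ((u j : ℝ):ℂ)^n.natAbs / (n.natAbs : ℂ)))
      Filter.atTop (nhds (-((π:ℂ) / (n.natAbs : ℂ)))) := by
    have h1 := ((Complex.continuous_ofReal.tendsto 1).comp hulim).pow n.natAbs
    have h2 := (h1.const_mul (π:ℂ)).div_const ((n.natAbs : ℂ))
    have h3 := h2.neg
    simpa using h3
  exact tendsto_nhds_unique hDCT hlim2

lemma periodic_II {E : Type*} [NormedAddCommGroup E] {f : ℝ → E} {T : ℝ} (hT : 0 < T)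
    (hp : Function.Periodic f T) (h0 : IntervalIntegrable f volume 0 T) (a : ℝ) :
    IntervalIntegrable f volume a (a + T) := by
  have hk : ∀ m : ℤ, IntervalIntegrable f volume (m*T) (m*T + T) := by
    intro m
    have h := h0.comp_sub_right (m*T)
    have hfe : (fun x => f (x - m*T)) = f := funext fun x => hp.sub_int_mul_eq m
    rw [hfe] at h
    have e1 : (0:ℝ) + m*T = m*T := by ring
    have e2 : T + m*T = m*T + T := by ring
    rwa [e1, e2] at h
  set m : ℤ := ⌈a/T⌉ with hm
  have h1 : a ≤ m*T := by
    rw [← div_le_iff₀ hT]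
    exact Int.le_ceil _
  have h2 : (m:ℝ)*T ≤ a + T := by
    have h3 : (m:ℝ) - 1 < a/T := by
      have := Int.ceil_lt_add_one (a/T)
      rw [hm]
      linarith
    have h4 : ((m:ℝ) - 1)*T < a := (lt_div_iff₀ hT).mp h3
    nlinarith
  have h1' : ((m:ℝ)-1)*T ≤ a := by
    have h3 : (m:ℝ) - 1 < a/T := by
      have := Int.ceil_lt_add_one (a/T)
      push_cast at this ⊢
      linarith
    nlinarith [(lt_div_iff₀ hT).mp h3]
  have ha : IntervalIntegrable f volume a (m*T) := by
    refine (hk (m-1)).mono_set ?_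
    rw [Set.uIcc_of_le (by linarith), Set.uIcc_of_le (by push_cast; linarith)]
    apply Set.Icc_subset_Icc
    · push_cast; linarith
    · push_cast; linarith
  have hb : IntervalIntegrable f volume (m*T) (a + T) := by
    refine (hk m).mono_set ?_
    rw [Set.uIcc_of_le (by linarith), Set.uIcc_of_le (by linarith)]
    exact Set.Icc_subset_Icc le_rfl (by linarith)
  exact ha.trans hb

lemma FF1_periodic : Function.Periodic (FF 1) (2*π) := by
  intro ψ
  simp only [FF]
  congr 3
  rw [show ((ψ + 2*π : ℝ) : ℂ) * Complex.I = (ψ:ℂ)*Complex.I + 2*(π:ℂ)*Complex.I by push_cast; ring,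
    Complex.exp_add, Complex.exp_two_pi_mul_I, mul_one]

lemma key_log (θ ψ : ℝ) :
    Real.log (‖Complex.exp ((ψ:ℂ) * Complex.I) - Complex.exp ((θ:ℂ) * Complex.I)‖)
      = FF 1 (ψ - θ) := by
  simp only [FF, Complex.ofReal_one, one_mul]
  congr 1
  have h : (1 : ℂ) - Complex.exp (((ψ - θ : ℝ):ℂ)*Complex.I)
      = Complex.exp (-((θ:ℂ)*Complex.I)) *
        (Complex.exp ((θ:ℂ)*Complex.I) - Complex.exp ((ψ:ℂ)*Complex.I)) := by
    rw [mul_sub, ← Complex.exp_add, ← Complex.exp_add,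
      show -((θ:ℂ)*Complex.I) + (θ:ℂ)*Complex.I = 0 by ring, Complex.exp_zero,
      show -((θ:ℂ)*Complex.I) + (ψ:ℂ)*Complex.I = ((ψ-θ:ℝ):ℂ)*Complex.I by push_cast; ring]
  rw [h, norm_mul, show -((θ:ℂ)*Complex.I) = ((-θ : ℝ):ℂ)*Complex.I by push_cast; ring,
    Complex.norm_exp_ofReal_mul_I, one_mul, norm_sub_rev]

theorem stmt8 (θ : ℝ) :
    IntegrableOn
      (fun ψ : ℝ =>
        Real.log ‖Complex.exp (ψ * Complex.I) - Complex.exp (θ * Complex.I)‖)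
      (Set.Icc 0 (2 * Real.pi)) MeasureTheory.volume ∧
    (∀ n : ℤ, n ≠ 0 →
      -((1 / (2 * Real.pi) : ℝ) • ∫ ψ in Set.Icc 0 (2 * Real.pi),
          Complex.exp ((n : ℂ) * ψ * Complex.I) *
            (Real.log ‖Complex.exp (ψ * Complex.I) - Complex.exp (θ * Complex.I)‖ : ℂ)) =
        Complex.exp ((n : ℂ) * θ * Complex.I) / (2 * ((|n| : ℤ) : ℂ))) ∧
    ((1 / (2 * Real.pi) : ℝ) • ∫ ψ in Set.Icc 0 (2 * Real.pi),
        Real.log ‖Complex.exp (ψ * Complex.I) - Complex.exp (θ * Complex.I)‖ = 0) := by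
  have hπ := Real.pi_pos
  have h2π : (0:ℝ) < 2*π := by linarith
  have hFF1_II : IntervalIntegrable (FF 1) volume 0 (2*π) := by
    rw [intervalIntegrable_iff_integrableOn_Ioc_of_le h2π.le,
      integrableOn_Ioc_iff_integrableOn_Ioo]
    exact FF_intOn (by norm_num)
  have hshift_II : IntervalIntegrable (fun ψ => FF 1 (ψ - θ)) volume 0 (2*π) := by
    have h := (periodic_II h2π FF1_periodic hFF1_II (-θ)).comp_sub_right θ
    rw [show -θ + θ = 0 by ring, show -θ + 2*π + θ = 2*π by ring] at h
    exact h
  have hkeyfun : (fun ψ : ℝ =>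
      Real.log (‖Complex.exp (ψ * Complex.I) - Complex.exp (θ * Complex.I)‖))
      = fun ψ => FF 1 (ψ - θ) := funext fun ψ => key_log θ ψ
  -- real integral of FF 1 over a period is 0
  have hreal0 : ∫ ψ in Set.Ioo (0:ℝ) (2*π), FF 1 ψ = 0 := by
    have h := coeff_one 0
    simp only [Int.cast_zero, zero_mul, Complex.exp_zero, one_mul, Int.natAbs_zero,
      Nat.cast_zero, div_zero, neg_zero] at h
    have h2 : ((∫ ψ in Set.Ioo (0:ℝ) (2*π), FF 1 ψ : ℝ) : ℂ) = 0 :=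
      (integral_ofReal (f := FF 1) (𝕜 := ℂ)).symm.trans h
    exact_mod_cast h2
  -- the shifted real integral
  have hreal_shift : ∫ ψ in Set.Icc (0:ℝ) (2*π),
      Real.log (‖Complex.exp (ψ * Complex.I) - Complex.exp (θ * Complex.I)‖) = 0 := by
    rw [hkeyfun, integral_Icc_eq_integral_Ioc, ← intervalIntegral.integral_of_le h2π.le,
      intervalIntegral.integral_comp_sub_right (fun φ => FF 1 φ) θ]
    have h := FF1_periodic.intervalIntegral_add_eq (0 - θ) 0
    rw [show 0 - θ + 2*π = 2*π - θ by ring, zero_add] at h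
    rw [h, intervalIntegral.integral_of_le h2π.le, integral_Ioc_eq_integral_Ioo]
    exact hreal0
  refine ⟨?_, ?_, ?_⟩
  · rw [hkeyfun, integrableOn_Icc_iff_integrableOn_Ioc]
    exact (intervalIntegrable_iff_integrableOn_Ioc_of_le h2π.le).mp hshift_II
  · intro n hn
    set H : ℝ → ℂ := fun φ => Complex.exp ((n:ℂ)*φ*Complex.I) * (FF 1 φ : ℂ) with hH
    have hHper : Function.Periodic H (2*π) := by
      intro φ
      rw [hH]
      simp only []
      rw [FF1_periodic φ]
      congr 1
      rw [show ((n:ℂ))*((φ + 2*π : ℝ):ℂ)*Complex.I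
          = (n:ℂ)*(φ:ℂ)*Complex.I + (n:ℂ)*(2*(π:ℂ)*Complex.I) by push_cast; ring,
        Complex.exp_add, Complex.exp_int_mul_two_pi_mul_I, mul_one]
    have hIccIoc : ∫ ψ in Set.Icc (0:ℝ) (2*π), Complex.exp ((n:ℂ)*ψ*Complex.I) *
        (Real.log (‖Complex.exp ((ψ:ℂ) * Complex.I) - Complex.exp ((θ:ℂ) * Complex.I)‖) : ℂ)
        = Complex.exp ((n:ℂ)*θ*Complex.I) * -((π:ℂ) / (n.natAbs : ℂ)) := by
      have hfun : (fun ψ : ℝ => Complex.exp ((n:ℂ)*ψ*Complex.I) *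
          (Real.log (‖Complex.exp ((ψ:ℂ) * Complex.I) - Complex.exp ((θ:ℂ) * Complex.I)‖) : ℂ))
          = fun ψ : ℝ => Complex.exp ((n:ℂ)*θ*Complex.I) * H (ψ - θ) := by
        funext ψ
        rw [key_log θ ψ, hH]
        simp only []
        rw [← mul_assoc, ← Complex.exp_add]
        congr 2
        push_cast
        ring
      rw [hfun, integral_Icc_eq_integral_Ioc, ← intervalIntegral.integral_of_le h2π.le,
        intervalIntegral.integral_const_mul,
        intervalIntegral.integral_comp_sub_right (fun φ => H φ) θ]
      have h := hHper.intervalIntegral_add_eq (0 - θ) 0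
      rw [show 0 - θ + 2*π = 2*π - θ by ring, zero_add] at h
      rw [h, ← setInt_eq]
      rw [hH]
      simp only []
      rw [coeff_one n]
    rw [hIccIoc]
    have hA : ((|n| : ℤ) : ℂ) = ((n.natAbs : ℕ) : ℂ) := by
      rw [Int.abs_eq_natAbs]
      exact Int.cast_natCast _
    have hAne : ((n.natAbs : ℕ) : ℂ) ≠ 0 := by
      simpa using Int.natAbs_ne_zero.mpr hn
    have hπne : ((π:ℝ):ℂ) ≠ 0 := Complex.ofReal_ne_zero.mpr pi_ne_zero
    rw [Complex.real_smul, hA]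
    push_cast
    field_simp
  · rw [hreal_shift, smul_zero]
end
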